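/- arXiv:2502.09259 — 7 statements merged into one kernel-verified Lean document; each statement's English description precedes it below -/
import Mathlib

section
/- Define a sequence (t_n) of rationals by t_0 = 0, t_1 = 1, and t_{n+1} = (1/(n+1)) Σ_{j=0}^{n} t_j t_{n-j} for n ≥ 1. Then for all n ≥ 0, (n!)^2 · t_n is an integer. -/
theorem tangent_coeff_denominator (t : ℕ → ℚ) (h0 : t 0 = 0) (h1 : t 1 = 1)
    (hrec : ∀ n : ℕ, 1 ≤ n →
      t (n + 1) = (1 / (n + 1 : ℚ)) * ∑ j ∈ Finset.range (n + 1), t j * t (n - j)) :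
    ∀ n : ℕ, ∃ z : ℤ, ((Nat.factorial n : ℚ)) ^ 2 * t n = z := by
  intro n
  induction n using Nat.strong_induction_on with
  | _ n ih =>
    match n with
    | 0 => exact ⟨0, by simp [h0]⟩
    | 1 => exact ⟨1, by simp [h1]⟩
    | (m + 2) =>
      have key : ∀ j ∈ Finset.range (m + 2), ∃ w : ℤ,
          ((Nat.factorial (m + 1) : ℚ)) ^ 2 * (t j * t (m + 1 - j)) = w := by
        intro j hj
        have hjle : j ≤ m + 1 := by
          have := Finset.mem_range.mp hj; omega
        obtain ⟨a, ha⟩ := ih j (by omega)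
        obtain ⟨b, hb⟩ := ih (m + 1 - j) (by omega)
        have hc : ((m + 1).choose j : ℚ) * (Nat.factorial j : ℚ) *
            (Nat.factorial (m + 1 - j) : ℚ) = (Nat.factorial (m + 1) : ℚ) := by
          exact_mod_cast congrArg (Nat.cast : ℕ → ℚ)
            (Nat.choose_mul_factorial_mul_factorial hjle)
        refine ⟨((m + 1).choose j : ℤ) ^ 2 * a * b, ?_⟩
        calc ((Nat.factorial (m + 1) : ℚ)) ^ 2 * (t j * t (m + 1 - j))
            = ((m + 1).choose j : ℚ) ^ 2 * ((Nat.factorial j : ℚ) ^ 2 * t j) *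
              ((Nat.factorial (m + 1 - j) : ℚ) ^ 2 * t (m + 1 - j)) := by
              rw [← hc]; ring
          _ = ((m + 1).choose j : ℚ) ^ 2 * a * b := by rw [ha, hb]
          _ = (((m + 1).choose j : ℤ) ^ 2 * a * b : ℤ) := by push_cast; ring
      choose f hf using key
      refine ⟨(m + 2) * ∑ j ∈ Finset.attach (Finset.range (m + 2)), f j j.2, ?_⟩
      have hr := hrec (m + 1) (by omega)
      have hfac : (Nat.factorial (m + 2) : ℚ) = (m + 2) * Nat.factorial (m + 1) := by
        rw [Nat.factorial_succ]; push_cast; ring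
      have hne : ((m : ℚ) + 2) ≠ 0 := by positivity
      have hsum : ((Nat.factorial (m + 1) : ℚ)) ^ 2 *
          ∑ j ∈ Finset.range (m + 2), t j * t (m + 1 - j) =
          ((∑ j ∈ Finset.attach (Finset.range (m + 2)), f j j.2 : ℤ) : ℚ) := by
        rw [Finset.mul_sum, ← Finset.sum_attach (Finset.range (m + 2))
          (fun j => ((Nat.factorial (m + 1) : ℚ)) ^ 2 * (t j * t (m + 1 - j)))]
        push_cast
        exact Finset.sum_congr rfl fun j _ => hf j j.2
      have hr2 : t (m + 2) = 1 / ((m + 1 : ℕ) + 1 : ℚ) *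
          ∑ j ∈ Finset.range (m + 2), t j * t (m + 1 - j) := hr
      rw [hr2, hfac]
      push_cast at hsum ⊢
      rw [← hsum]
      field_simp
      ring
end

section
/- Define a sequence (b_n) of rationals by b_0 = 1 and b_{n+1} = -(1/(n+2)) ( b_n + Σ_{j=1}^{n} b_j b_{n+1-j} ) for n ≥ 0. Then for all n ≥ 1, 24^n · (n-1)! · (n+1)! · b_n is an integer. -/
lemma aux_div_gcd_dvd_choose (m k : ℕ) (hm : 1 ≤ m) (hk : k ≤ m) :
    m / Nat.gcd m k ∣ Nat.choose m k := by
  rcases Nat.eq_zero_or_pos k with rfl | hk0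
  · simp [Nat.div_self hm]
  · have hid : m * Nat.choose (m - 1) (k - 1) = k * Nat.choose m k := by
      have h := Nat.add_one_mul_choose_eq (m - 1) (k - 1)
      have h1 : m - 1 + 1 = m := by omega
      have h2 : k - 1 + 1 = k := by omega
      rw [h1, h2] at h
      exact h.trans (mul_comm _ _)
    have hgm : Nat.gcd m k ∣ m := Nat.gcd_dvd_left m k
    have hgk : Nat.gcd m k ∣ k := Nat.gcd_dvd_right m k
    have hgpos : 0 < Nat.gcd m k := Nat.gcd_pos_of_pos_left k hm
    have hco : Nat.Coprime (m / Nat.gcd m k) (k / Nat.gcd m k) :=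
      Nat.coprime_div_gcd_div_gcd hgpos
    have e1 : Nat.gcd m k * (m / Nat.gcd m k) = m := Nat.mul_div_cancel' hgm
    have e2 : Nat.gcd m k * (k / Nat.gcd m k) = k := Nat.mul_div_cancel' hgk
    have hdvd : (m / Nat.gcd m k) ∣ (k / Nat.gcd m k) * Nat.choose m k := by
      refine ⟨Nat.choose (m - 1) (k - 1), ?_⟩
      have hmul : Nat.gcd m k * (k / Nat.gcd m k * Nat.choose m k) =
          Nat.gcd m k * (m / Nat.gcd m k * Nat.choose (m - 1) (k - 1)) := by
        calc Nat.gcd m k * (k / Nat.gcd m k * Nat.choose m k)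
            = (Nat.gcd m k * (k / Nat.gcd m k)) * Nat.choose m k := by ring
          _ = k * Nat.choose m k := by rw [e2]
          _ = m * Nat.choose (m - 1) (k - 1) := hid.symm
          _ = (Nat.gcd m k * (m / Nat.gcd m k)) * Nat.choose (m - 1) (k - 1) := by rw [e1]
          _ = Nat.gcd m k * (m / Nat.gcd m k * Nat.choose (m - 1) (k - 1)) := by ring
      exact Nat.eq_of_mul_eq_mul_left hgpos hmul
    exact hco.dvd_of_dvd_mul_left hdvd

lemma aux_choose_two (m : ℕ) (hm : 1 ≤ m) : Nat.choose m 2 * 2 = m * (m - 1) := by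
  have h := Nat.add_one_mul_choose_eq (m - 1) 1
  have h1 : m - 1 + 1 = m := by omega
  rw [h1] at h
  rw [Nat.choose_one_right] at h
  exact h.symm

lemma aux_key (m j : ℕ) (hm : 2 ≤ m) (hj : 1 ≤ j) (hjm : j + 1 ≤ m) :
    m ∣ 2 * (Nat.choose m (j - 1) * Nat.choose m (j + 1)) := by
  have h2 := aux_choose_two m (by omega)
  rcases eq_or_lt_of_le hj with rfl | hj2
  · refine ⟨m - 1, ?_⟩
    norm_num
    calc 2 * m.choose 2 = m.choose 2 * 2 := by ring
      _ = m * (m - 1) := h2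
  rcases eq_or_lt_of_le hjm with hje | hjm2
  · have hsymm : Nat.choose m (j - 1) = Nat.choose m 2 := by
      have he : j - 1 = m - 2 := by omega
      rw [he]
      exact Nat.choose_symm (by omega)
    rw [hsymm, hje, Nat.choose_self]
    refine ⟨m - 1, ?_⟩
    calc 2 * (m.choose 2 * 1) = m.choose 2 * 2 := by ring
      _ = m * (m - 1) := h2
  · have hm0 : 0 < m := by omega
    have hd1 : m / Nat.gcd m (j - 1) ∣ Nat.choose m (j - 1) :=
      aux_div_gcd_dvd_choose m (j - 1) (by omega) (by omega)
    have hd2 : m / Nat.gcd m (j + 1) ∣ Nat.choose m (j + 1) :=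
      aux_div_gcd_dvd_choose m (j + 1) (by omega) (by omega)
    have hgg : Nat.gcd (Nat.gcd m (j - 1)) (Nat.gcd m (j + 1)) ∣ 2 := by
      have ha : Nat.gcd (Nat.gcd m (j - 1)) (Nat.gcd m (j + 1)) ∣ (j - 1) :=
        (Nat.gcd_dvd_left _ _).trans (Nat.gcd_dvd_right m (j - 1))
      have hb : Nat.gcd (Nat.gcd m (j - 1)) (Nat.gcd m (j + 1)) ∣ (j + 1) :=
        (Nat.gcd_dvd_right _ _).trans (Nat.gcd_dvd_right m (j + 1))
      have hc := Nat.dvd_sub hb ha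
      simpa [show j + 1 - (j - 1) = 2 by omega] using hc
    have hlcm : Nat.lcm (Nat.gcd m (j - 1)) (Nat.gcd m (j + 1)) ∣ m :=
      Nat.lcm_dvd (Nat.gcd_dvd_left m (j - 1)) (Nat.gcd_dvd_left m (j + 1))
    have hprod : Nat.gcd m (j - 1) * Nat.gcd m (j + 1) ∣ 2 * m := by
      rw [← Nat.gcd_mul_lcm (Nat.gcd m (j - 1)) (Nat.gcd m (j + 1))]
      exact mul_dvd_mul hgg hlcm
    obtain ⟨s, hs⟩ := hprod
    have hg1p : 0 < Nat.gcd m (j - 1) := Nat.gcd_pos_of_pos_left _ hm0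
    have hg2p : 0 < Nat.gcd m (j + 1) := Nat.gcd_pos_of_pos_left _ hm0
    have e1 : m / Nat.gcd m (j - 1) * Nat.gcd m (j - 1) = m :=
      Nat.div_mul_cancel (Nat.gcd_dvd_left m (j - 1))
    have e2 : m / Nat.gcd m (j + 1) * Nat.gcd m (j + 1) = m :=
      Nat.div_mul_cancel (Nat.gcd_dvd_left m (j + 1))
    have hmdvd : m ∣ 2 * (m / Nat.gcd m (j - 1) * (m / Nat.gcd m (j + 1))) := by
      refine ⟨s, ?_⟩
      have hkey : 2 * (m / Nat.gcd m (j - 1) * (m / Nat.gcd m (j + 1))) *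
          (Nat.gcd m (j - 1) * Nat.gcd m (j + 1)) =
          m * s * (Nat.gcd m (j - 1) * Nat.gcd m (j + 1)) := by
        calc 2 * (m / Nat.gcd m (j - 1) * (m / Nat.gcd m (j + 1))) *
            (Nat.gcd m (j - 1) * Nat.gcd m (j + 1))
            = 2 * ((m / Nat.gcd m (j - 1) * Nat.gcd m (j - 1)) *
              (m / Nat.gcd m (j + 1) * Nat.gcd m (j + 1))) := by ring
          _ = 2 * (m * m) := by rw [e1, e2]
          _ = m * (2 * m) := by ring
          _ = m * (Nat.gcd m (j - 1) * Nat.gcd m (j + 1) * s) := by rw [← hs]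
          _ = m * s * (Nat.gcd m (j - 1) * Nat.gcd m (j + 1)) := by ring
      exact Nat.eq_of_mul_eq_mul_right (by positivity) hkey
    exact hmdvd.trans (mul_dvd_mul_left 2 (mul_dvd_mul hd1 hd2))

lemma aux_middle (m j : ℕ) (hj : 2 ≤ j) (heven : Even j) (hm : m = 2 * j) :
    m ∣ Nat.choose m (j - 1) := by
  obtain ⟨r, hr⟩ := heven
  have hg : Nat.gcd m (j - 1) = 1 := by
    have hd1 : Nat.gcd m (j - 1) ∣ m := Nat.gcd_dvd_left _ _
    have hd2 : Nat.gcd m (j - 1) ∣ j - 1 := Nat.gcd_dvd_right _ _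
    have h2d : ¬ (2 ∣ Nat.gcd m (j - 1)) := by
      intro h
      have : (2 : ℕ) ∣ j - 1 := h.trans hd2
      omega
    have hco2 : Nat.Coprime (Nat.gcd m (j - 1)) 2 := by
      rw [Nat.coprime_comm]
      exact (Nat.Prime.coprime_iff_not_dvd Nat.prime_two).mpr h2d
    have hdj : Nat.gcd m (j - 1) ∣ j := by
      refine hco2.dvd_of_dvd_mul_left ?_
      rw [← hm]
      exact hd1
    have hone : Nat.gcd m (j - 1) ∣ 1 := by
      have := Nat.dvd_sub hdj hd2
      simpa [show j - (j - 1) = 1 by omega] using this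
    exact Nat.dvd_one.mp hone
  have h := aux_div_gcd_dvd_choose m (j - 1) (by omega) (by omega)
  rwa [hg, Nat.div_one] at h

lemma aux_sum_int (s : Finset ℕ) (f : ℕ → ℚ) (h : ∀ j ∈ s, ∃ z : ℤ, f j = z) :
    ∃ z : ℤ, ∑ j ∈ s, f j = z := by
  classical
  induction s using Finset.induction_on with
  | empty => exact ⟨0, by simp⟩
  | insert x s hx ih =>
    obtain ⟨z1, hz1⟩ := h _ (Finset.mem_insert_self _ _)
    obtain ⟨z2, hz2⟩ := ih (fun j hj => h j (Finset.mem_insert_of_mem hj))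
    exact ⟨z1 + z2, by rw [Finset.sum_insert hx, hz1, hz2]; push_cast; ring⟩

lemma aux_odd (b : ℕ → ℚ) (hb1 : b 1 = -(1/2))
    (hrec : ∀ n : ℕ, b (n + 1) =
      -(1 / (n + 2 : ℚ)) * (b n + ∑ j ∈ Finset.Icc 1 n, b j * b (n + 1 - j))) :
    ∀ k : ℕ, 1 ≤ k → b (2 * k + 1) = 0 := by
  intro k
  induction k using Nat.strong_induction_on with
  | _ k IH =>
  intro hk
  have hr := hrec (2 * k)
  have hsum := Finset.sum_eq_add (s := Finset.Icc 1 (2 * k))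
    (f := fun j => b j * b (2 * k + 1 - j)) 1 (2 * k) (by omega)
    (by
      intro c hc hne
      simp only [Finset.mem_Icc] at hc
      rcases Nat.even_or_odd c with hev | hod
      · obtain ⟨r, hrr⟩ := hev
        have he : 2 * k + 1 - c = 2 * (k - r) + 1 := by omega
        simp only [he, IH (k - r) (by omega) (by omega), mul_zero]
      · obtain ⟨r, hrr⟩ := hod
        simp only [show c = 2 * r + 1 from hrr, IH r (by omega) (by omega), zero_mul])
    (fun h => absurd (Finset.mem_Icc.mpr ⟨le_refl 1, by omega⟩) h)
    (fun h => absurd (Finset.mem_Icc.mpr ⟨by omega, le_refl _⟩) h)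
  simp only [show 2 * k + 1 - 1 = 2 * k from by omega,
    show 2 * k + 1 - 2 * k = 1 from by omega] at hsum
  rw [hsum, hb1] at hr
  rw [hr]; ring

lemma aux_coef (M j k q c : ℕ) (hjk : j + k = M + 3) (hj : 1 ≤ j) (hk : 1 ≤ k)
    (hq : q * (M + 3) = c * (Nat.choose (M+3) (j-1) * Nat.choose (M+3) (j+1))) :
    (c : ℚ) * 24 ^ (M + 3) * ((M+2).factorial : ℚ) * ((M+3).factorial : ℚ)
      = (q : ℚ) * ((24:ℚ) ^ j * ((j-1).factorial : ℚ) * ((j+1).factorial : ℚ))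
          * ((24:ℚ) ^ k * ((k-1).factorial : ℚ) * ((k+1).factorial : ℚ)) := by
  have hc1 : Nat.choose (M+3) (j-1) * (j-1).factorial * (k+1).factorial = (M+3).factorial := by
    have h := Nat.choose_mul_factorial_mul_factorial (show j - 1 ≤ M + 3 by omega)
    rwa [show M + 3 - (j-1) = k + 1 from by omega] at h
  have hc2 : Nat.choose (M+3) (j+1) * (j+1).factorial * (k-1).factorial = (M+3).factorial := by
    have h := Nat.choose_mul_factorial_mul_factorial (show j + 1 ≤ M + 3 by omega)
    rwa [show M + 3 - (j+1) = k - 1 from by omega] at h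
  have hnat : q * ((j-1).factorial * (j+1).factorial * ((k-1).factorial * (k+1).factorial)) * (M+3)
      = c * ((M+3).factorial * (M+3).factorial) := by
    calc q * ((j-1).factorial * (j+1).factorial * ((k-1).factorial * (k+1).factorial)) * (M+3)
        = (q * (M+3)) * ((j-1).factorial * (j+1).factorial *
            ((k-1).factorial * (k+1).factorial)) := by ring
      _ = (c * (Nat.choose (M+3) (j-1) * Nat.choose (M+3) (j+1))) * ((j-1).factorial *
            (j+1).factorial * ((k-1).factorial * (k+1).factorial)) := by rw [hq]
      _ = c * ((Nat.choose (M+3) (j-1) * (j-1).factorial * (k+1).factorial) *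
            (Nat.choose (M+3) (j+1) * (j+1).factorial * (k-1).factorial)) := by ring
      _ = c * ((M+3).factorial * (M+3).factorial) := by rw [hc1, hc2]
  have hfn : (M+3) * (M+2).factorial = (M+3).factorial := by
    rw [show M + 3 = M + 2 + 1 from rfl]
    exact (Nat.factorial_succ (M+2)).symm
  have hfacq : ((M:ℚ)+3) * ((M+2).factorial : ℚ) = ((M+3).factorial : ℚ) := by
    exact_mod_cast congrArg (Nat.cast (R := ℚ)) hfn
  have hm : ((M:ℚ)+3) ≠ 0 := by positivity
  have hpow : (24:ℚ) ^ j * (24:ℚ) ^ k = (24:ℚ) ^ (M+3) := by rw [← pow_add, hjk]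
  have hnatq := congrArg (Nat.cast (R := ℚ)) hnat
  push_cast at hnatq
  refine mul_right_cancel₀ hm ?_
  linear_combination ((c:ℚ) * 24^(M+3) * ((M+3).factorial : ℚ)) * hfacq - (24:ℚ)^(M+3) * hnatq
    - ((q:ℚ) * (((j-1).factorial : ℚ) * ((j+1).factorial : ℚ) *
        (((k-1).factorial : ℚ) * ((k+1).factorial : ℚ))) * ((M:ℚ)+3)) * hpow


theorem bernoulli_coeff_denominator (b : ℕ → ℚ) (h0 : b 0 = 1)
    (hrec : ∀ n : ℕ, b (n + 1) =
      -(1 / (n + 2 : ℚ)) * (b n + ∑ j ∈ Finset.Icc 1 n, b j * b (n + 1 - j))) :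
    ∀ n : ℕ, 1 ≤ n → ∃ z : ℤ,
      (24 : ℚ) ^ n * (Nat.factorial (n - 1) : ℚ) * (Nat.factorial (n + 1) : ℚ) * b n = z := by
  have hb1 : b 1 = -(1/2) := by
    have h := hrec 0
    rw [h0] at h
    norm_num [show Finset.Icc 1 0 = (∅ : Finset ℕ) from rfl] at h
    linarith [h]
  have hodd := aux_odd b hb1 hrec
  intro n
  induction n using Nat.strong_induction_on with
  | _ n IH =>
  intro hn
  by_cases h1 : n = 1
  · subst h1
    exact ⟨-24, by rw [hb1]; norm_num [Nat.factorial]⟩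
  by_cases h2 : n = 2
  · subst h2
    have hb2 : b 2 = 1/12 := by
      have h := hrec 1
      rw [show Finset.Icc 1 1 = ({1} : Finset ℕ) from rfl, Finset.sum_singleton] at h
      norm_num [hb1] at h
      linarith [h]
    exact ⟨288, by rw [hb2]; norm_num [Nat.factorial]⟩
  obtain ⟨M, rfl⟩ : ∃ M, n = M + 3 := ⟨n - 3, by omega⟩
  -- main recurrence, cleared of the denominator
  have hmain : (24:ℚ) ^ (M+3) * ((M+2).factorial : ℚ) * ((M+4).factorial : ℚ) * b (M+3)
      = -((24:ℚ) ^ (M+3) * ((M+2).factorial : ℚ) * ((M+3).factorial : ℚ) * b (M+2)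
         + ∑ j ∈ Finset.Icc 1 (M+2), (24:ℚ) ^ (M+3) * ((M+2).factorial : ℚ) *
             ((M+3).factorial : ℚ) * (b j * b (M+3-j))) := by
    have hr := hrec (M+2)
    rw [show M+2+1 = M+3 from rfl] at hr
    rw [hr]
    rw [show (M+4).factorial = (M+4) * (M+3).factorial from by
      rw [show M+4 = M+3+1 from rfl]; exact Nat.factorial_succ (M+3)]
    rw [← Finset.mul_sum]
    have h4 : ((M:ℚ)+2)+2 ≠ 0 := by positivity
    push_cast
    field_simp
    ring
  obtain ⟨zN, hzN⟩ := IH (M+2) (by omega) (by omega)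
  rw [show M+2-1 = M+1 from by omega, show M+2+1 = M+3 from rfl] at hzN
  have hX : (24:ℚ) ^ (M+3) * ((M+2).factorial : ℚ) * ((M+3).factorial : ℚ) * b (M+2)
      = ((24 * (M+2) * zN : ℤ) : ℚ) := by
    rw [show ((M+2).factorial : ℚ) = ((M:ℚ)+2) * ((M+1).factorial : ℚ) from by
      rw [show M+2 = M+1+1 from rfl, Nat.factorial_succ]; push_cast; ring]
    push_cast
    linear_combination (24 * ((M:ℚ)+2)) * hzN
  -- split of the convolution sum
  have hflip : ∑ j ∈ (Finset.Icc 1 (M+2)).filter (fun j => M+3 < 2*j),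
        (24:ℚ) ^ (M+3) * ((M+2).factorial : ℚ) * ((M+3).factorial : ℚ) * (b j * b (M+3-j))
      = ∑ j ∈ (Finset.Icc 1 (M+2)).filter (fun j => 2*j < M+3),
        (24:ℚ) ^ (M+3) * ((M+2).factorial : ℚ) * ((M+3).factorial : ℚ) * (b j * b (M+3-j)) := by
    refine Finset.sum_nbij' (fun j => M+3-j) (fun j => M+3-j) ?_ ?_ ?_ ?_ ?_
    · intro a ha
      simp only [Finset.mem_filter, Finset.mem_Icc] at ha ⊢
      omega
    · intro a ha
      simp only [Finset.mem_filter, Finset.mem_Icc] at ha ⊢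
      omega
    · intro a ha
      simp only [Finset.mem_filter, Finset.mem_Icc] at ha
      show M+3-(M+3-a) = a
      omega
    · intro a ha
      simp only [Finset.mem_filter, Finset.mem_Icc] at ha
      show M+3-(M+3-a) = a
      omega
    · intro a ha
      simp only [Finset.mem_filter, Finset.mem_Icc] at ha
      rw [show M+3-(M+3-a) = a from by omega]
      ring
  have hTsplit : ∑ j ∈ Finset.Icc 1 (M+2), (24:ℚ) ^ (M+3) * ((M+2).factorial : ℚ) *
        ((M+3).factorial : ℚ) * (b j * b (M+3-j))
      = (∑ j ∈ (Finset.Icc 1 (M+2)).filter (fun j => 2*j < M+3),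
          2 * ((24:ℚ) ^ (M+3) * ((M+2).factorial : ℚ) * ((M+3).factorial : ℚ) *
            (b j * b (M+3-j))))
        + ∑ j ∈ (Finset.Icc 1 (M+2)).filter (fun j => 2*j = M+3),
          (24:ℚ) ^ (M+3) * ((M+2).factorial : ℚ) * ((M+3).factorial : ℚ) *
            (b j * b (M+3-j)) := by
    classical
    have h1 := Finset.sum_filter_add_sum_filter_not (Finset.Icc 1 (M+2))
      (fun j => 2*j < M+3)
      (fun j => (24:ℚ) ^ (M+3) * ((M+2).factorial : ℚ) * ((M+3).factorial : ℚ) *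
        (b j * b (M+3-j)))
    have h2 := Finset.sum_filter_add_sum_filter_not
      ((Finset.Icc 1 (M+2)).filter (fun j => ¬ 2*j < M+3))
      (fun j => 2*j = M+3)
      (fun j => (24:ℚ) ^ (M+3) * ((M+2).factorial : ℚ) * ((M+3).factorial : ℚ) *
        (b j * b (M+3-j)))
    rw [Finset.filter_filter, Finset.filter_filter] at h2
    rw [Finset.filter_congr (fun x _ => show (¬ 2*x < M+3 ∧ 2*x = M+3) ↔ (2*x = M+3) from
      ⟨fun h => h.2, fun h => ⟨by omega, h⟩⟩)] at h2
    rw [Finset.filter_congr (fun x _ => show (¬ 2*x < M+3 ∧ ¬ 2*x = M+3) ↔ (M+3 < 2*x) from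
      ⟨fun h => by omega, fun h => ⟨by omega, by omega⟩⟩)] at h2
    rw [hflip] at h2
    have hmul : ∑ j ∈ (Finset.Icc 1 (M+2)).filter (fun j => 2*j < M+3),
          2 * ((24:ℚ) ^ (M+3) * ((M+2).factorial : ℚ) * ((M+3).factorial : ℚ) *
            (b j * b (M+3-j)))
        = 2 * ∑ j ∈ (Finset.Icc 1 (M+2)).filter (fun j => 2*j < M+3),
          (24:ℚ) ^ (M+3) * ((M+2).factorial : ℚ) * ((M+3).factorial : ℚ) *
            (b j * b (M+3-j)) := by
      rw [Finset.mul_sum]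
    rw [hmul]
    linarith [h1, h2]
  have hA : ∃ zA : ℤ, ∑ j ∈ (Finset.Icc 1 (M+2)).filter (fun j => 2*j < M+3),
      2 * ((24:ℚ) ^ (M+3) * ((M+2).factorial : ℚ) * ((M+3).factorial : ℚ) *
        (b j * b (M+3-j))) = zA := by
    apply aux_sum_int
    intro j hj
    simp only [Finset.mem_filter, Finset.mem_Icc] at hj
    obtain ⟨⟨hj1, hj2⟩, hjlt⟩ := hj
    obtain ⟨zj, hzj⟩ := IH j (by omega) hj1
    obtain ⟨zk, hzk⟩ := IH (M+3-j) (by omega) (by omega)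
    have hdvd := aux_key (M+3) j (by omega) hj1 (by omega)
    obtain ⟨w, hw⟩ := hdvd
    have hq : w * (M+3) = 2 * (Nat.choose (M+3) (j-1) * Nat.choose (M+3) (j+1)) := by
      rw [mul_comm]; exact hw.symm
    refine ⟨(w : ℤ) * zj * zk, ?_⟩
    have hco := aux_coef M j (M+3-j) w 2 (by omega) hj1 (by omega) hq
    push_cast
    push_cast at hco
    linear_combination (b j * b (M+3-j)) * hco
      + ((w : ℚ) * ((24:ℚ) ^ (M+3-j) * ((M+3-j-1).factorial : ℚ) * ((M+3-j+1).factorial : ℚ) *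
            b (M+3-j))) * hzj
      + ((w : ℚ) * (zj : ℚ)) * hzk
  have hB : ∃ zB : ℤ, ∑ j ∈ (Finset.Icc 1 (M+2)).filter (fun j => 2*j = M+3),
      (24:ℚ) ^ (M+3) * ((M+2).factorial : ℚ) * ((M+3).factorial : ℚ) *
        (b j * b (M+3-j)) = zB := by
    apply aux_sum_int
    intro j hj
    simp only [Finset.mem_filter, Finset.mem_Icc] at hj
    obtain ⟨⟨hj1, hj2⟩, hjeq⟩ := hj
    rcases Nat.even_or_odd j with hev | hod
    · obtain ⟨zj, hzj⟩ := IH j (by omega) hj1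
      have h2j : 2 ≤ j := by obtain ⟨r, hr⟩ := hev; omega
      have hdvd : (M+3) ∣ (Nat.choose (M+3) (j-1) * Nat.choose (M+3) (j+1)) :=
        Dvd.dvd.mul_right (aux_middle (M+3) j h2j hev (by omega)) _
      obtain ⟨w, hw⟩ := hdvd
      have hq : w * (M+3) = 1 * (Nat.choose (M+3) (j-1) * Nat.choose (M+3) (j+1)) := by
        rw [one_mul, mul_comm]; exact hw.symm
      refine ⟨(w : ℤ) * zj * zj, ?_⟩
      have hco := aux_coef M j j w 1 (by omega) hj1 hj1 hq
      rw [show M+3-j = j from by omega]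
      push_cast
      push_cast at hco
      linear_combination (b j * b j) * hco
        + ((w : ℚ) * ((24:ℚ) ^ j * ((j-1).factorial : ℚ) * ((j+1).factorial : ℚ) * b j
              + (zj : ℚ))) * hzj
    · obtain ⟨r, hr⟩ := hod
      have hbz : b j = 0 := by
        rw [show j = 2*r+1 from hr]
        exact hodd r (by omega)
      exact ⟨0, by rw [hbz]; push_cast; ring⟩
  obtain ⟨zA, hA⟩ := hA
  obtain ⟨zB, hB⟩ := hB
  refine ⟨-((24 * (M+2) * zN) + (zA + zB)), ?_⟩
  rw [show M+3-1 = M+2 from by omega, show M+3+1 = M+4 from rfl]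
  rw [hmain, hX, hTsplit, hA, hB]
  push_cast
  ring
end

section
/- Let g₂, g₃ be rational numbers and define a sequence (p_n)_{n≥2} by p_2 = g₂/20, p_3 = g₃/28, and p_n = (3/((2n+1)(n-3))) Σ_{j=2}^{n-2} p_j p_{n-j} for n ≥ 4. If D is a positive integer such that D·g₂/20 and D·g₃/28 are integers, and Π = 2520, then for all n ≥ 1, D^{n+1} · Π^n · (n-1)! · n! · (2n)! · (2n+5)! · p_{n+2} is an integer. -/
/-- Floor superadditivity. -/
private lemma wpd_div_add_div_le (n x y : ℕ) : x / n + y / n ≤ (x + y) / n := by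
  rcases Nat.eq_zero_or_pos n with rfl | hn
  · simp
  · rw [Nat.le_div_iff_mul_le hn, Nat.add_mul]
    exact Nat.add_le_add (Nat.div_mul_le_self x n) (Nat.div_mul_le_self y n)

/-- Core floor inequality on residues. -/
private lemma wpd_floor_core (n α β : ℕ) (hn : 0 < n) :
    (α + 1) / n + (2 * α + 2) / n + (2 * α + 7) / n +
      ((β + 1) / n + (2 * β + 2) / n + (2 * β + 7) / n) ≤
    (α + β + 2) / n + (α + β + 4) / n + (2 * α + 2 * β + 8) / n +
      (2 * α + 2 * β + 12) / n := by
  have h1 : (α + 1) / n + (β + 1) / n ≤ (α + β + 2) / n := by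
    have := wpd_div_add_div_le n (α + 1) (β + 1)
    rwa [show α + 1 + (β + 1) = α + β + 2 by omega] at this
  have h2 : (2 * α + 2) / n + (2 * β + 7) / n ≤ (2 * α + 2 * β + 12) / n := by
    refine le_trans (wpd_div_add_div_le n _ _) (Nat.div_le_div_right (by omega))
  have h3 : (2 * α + 7) / n + (2 * β + 2) / n ≤ (2 * α + 2 * β + 9) / n := by
    refine le_trans (wpd_div_add_div_le n _ _) (Nat.div_le_div_right (by omega))
  by_cases hd : n ∣ 2 * α + 2 * β + 9
  · rcases lt_or_ge (2 * α + 2 * β + 9) (2 * n) with hlt | hge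
    · obtain ⟨k, hk⟩ := hd
      have hk0 : k ≠ 0 := by rintro rfl; simp at hk
      have hk1 : k = 1 := by
        by_contra hne
        have h2k : 2 ≤ k := by omega
        have : 2 * n ≤ n * k := by
          calc 2 * n = n * 2 := by ring
            _ ≤ n * k := Nat.mul_le_mul_left n h2k
        omega
      subst hk1
      rw [Nat.mul_one] at hk
      have hn' : n = 2 * α + 2 * β + 9 := by omega
      have z1 : (α + 1) / n = 0 := Nat.div_eq_of_lt (by omega)
      have z2 : (2 * α + 2) / n = 0 := Nat.div_eq_of_lt (by omega)
      have z3 : (2 * α + 7) / n = 0 := Nat.div_eq_of_lt (by omega)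
      have z4 : (β + 1) / n = 0 := Nat.div_eq_of_lt (by omega)
      have z5 : (2 * β + 2) / n = 0 := Nat.div_eq_of_lt (by omega)
      have z6 : (2 * β + 7) / n = 0 := Nat.div_eq_of_lt (by omega)
      rw [z1, z2, z3, z4, z5, z6]
      simp
    · have hR2 : 1 ≤ (α + β + 4) / n := (Nat.one_le_div_iff hn).2 (by omega)
      have h4 : (2 * α + 2 * β + 9) / n ≤ (2 * α + 2 * β + 8) / n + 1 := by
        calc (2 * α + 2 * β + 9) / n ≤ (2 * α + 2 * β + 8 + n) / n :=
              Nat.div_le_div_right (by omega)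
          _ = (2 * α + 2 * β + 8) / n + 1 := Nat.add_div_right _ hn
      omega
  · have h9 : 2 * α + 2 * β + 8 + 1 = 2 * α + 2 * β + 9 := by omega
    have hd' : ¬ n ∣ 2 * α + 2 * β + 8 + 1 := by rw [h9]; exact hd
    have h4 : (2 * α + 2 * β + 9) / n = (2 * α + 2 * β + 8) / n := by
      rw [← h9]
      exact Nat.succ_div_of_not_dvd hd'
    have hR2 : (0:ℕ) ≤ (α + β + 4) / n := Nat.zero_le _
    omega

/-- The full floor inequality. -/
private lemma wpd_floor_main (n a b : ℕ) (hn : 0 < n) :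
    a / n + (a + 1) / n + (2 * a + 2) / n + (2 * a + 7) / n +
      (b / n + (b + 1) / n + (2 * b + 2) / n + (2 * b + 7) / n) ≤
    (a + b + 2) / n + (a + b + 4) / n + (2 * a + 2 * b + 8) / n +
      (2 * a + 2 * b + 12) / n := by
  have Ha : n * (a / n) + a % n = a := Nat.div_add_mod a n
  have Hb : n * (b / n) + b % n = b := Nat.div_add_mod b n
  set qa := a / n with hqa
  set qb := b / n with hqb
  set α := a % n with hα
  set β := b % n with hβ
  have hq2a : n * (2 * qa) = 2 * (n * qa) := by ring
  have hq2b : n * (2 * qb) = 2 * (n * qb) := by ring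
  have hqab : n * (qa + qb) = n * qa + n * qb := by ring
  have hq2ab : n * (2 * qa + 2 * qb) = 2 * (n * qa) + 2 * (n * qb) := by ring
  have e1 : (a + 1) / n = (α + 1) / n + qa := by
    rw [show a + 1 = α + 1 + n * qa by omega, Nat.add_mul_div_left _ _ hn]
  have e2 : (2 * a + 2) / n = (2 * α + 2) / n + 2 * qa := by
    rw [show 2 * a + 2 = 2 * α + 2 + n * (2 * qa) by omega, Nat.add_mul_div_left _ _ hn]
  have e3 : (2 * a + 7) / n = (2 * α + 7) / n + 2 * qa := by
    rw [show 2 * a + 7 = 2 * α + 7 + n * (2 * qa) by omega, Nat.add_mul_div_left _ _ hn]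
  have e4 : (b + 1) / n = (β + 1) / n + qb := by
    rw [show b + 1 = β + 1 + n * qb by omega, Nat.add_mul_div_left _ _ hn]
  have e5 : (2 * b + 2) / n = (2 * β + 2) / n + 2 * qb := by
    rw [show 2 * b + 2 = 2 * β + 2 + n * (2 * qb) by omega, Nat.add_mul_div_left _ _ hn]
  have e6 : (2 * b + 7) / n = (2 * β + 7) / n + 2 * qb := by
    rw [show 2 * b + 7 = 2 * β + 7 + n * (2 * qb) by omega, Nat.add_mul_div_left _ _ hn]
  have f1 : (a + b + 2) / n = (α + β + 2) / n + (qa + qb) := by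
    rw [show a + b + 2 = α + β + 2 + n * (qa + qb) by omega, Nat.add_mul_div_left _ _ hn]
  have f2 : (a + b + 4) / n = (α + β + 4) / n + (qa + qb) := by
    rw [show a + b + 4 = α + β + 4 + n * (qa + qb) by omega, Nat.add_mul_div_left _ _ hn]
  have f3 : (2 * a + 2 * b + 8) / n = (2 * α + 2 * β + 8) / n + (2 * qa + 2 * qb) := by
    rw [show 2 * a + 2 * b + 8 = 2 * α + 2 * β + 8 + n * (2 * qa + 2 * qb) by omega,
      Nat.add_mul_div_left _ _ hn]
  have f4 : (2 * a + 2 * b + 12) / n = (2 * α + 2 * β + 12) / n + (2 * qa + 2 * qb) := by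
    rw [show 2 * a + 2 * b + 12 = 2 * α + 2 * β + 12 + n * (2 * qa + 2 * qb) by omega,
      Nat.add_mul_div_left _ _ hn]
  have hcore := wpd_floor_core n α β hn
  omega

/-- Legendre-type divisibility of factorial products. -/
private lemma wpd_fac_dvd (a b : ℕ) :
    (Nat.factorial a * Nat.factorial (a + 1) * Nat.factorial (2 * a + 2) *
        Nat.factorial (2 * a + 7)) *
      (Nat.factorial b * Nat.factorial (b + 1) * Nat.factorial (2 * b + 2) *
        Nat.factorial (2 * b + 7)) ∣
    Nat.factorial (a + b + 2) * Nat.factorial (a + b + 4) *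
      Nat.factorial (2 * a + 2 * b + 8) * Nat.factorial (2 * a + 2 * b + 12) := by
  have hne : ∀ m : ℕ, Nat.factorial m ≠ 0 := fun m => (Nat.factorial_pos m).ne'
  have hbot : (Nat.factorial a * Nat.factorial (a + 1) * Nat.factorial (2 * a + 2) *
      Nat.factorial (2 * a + 7)) *
      (Nat.factorial b * Nat.factorial (b + 1) * Nat.factorial (2 * b + 2) *
        Nat.factorial (2 * b + 7)) ≠ 0 := by
    refine mul_ne_zero (mul_ne_zero (mul_ne_zero (mul_ne_zero ?_ ?_) ?_) ?_)
      (mul_ne_zero (mul_ne_zero (mul_ne_zero ?_ ?_) ?_) ?_) <;> exact hne _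
  have htop : Nat.factorial (a + b + 2) * Nat.factorial (a + b + 4) *
      Nat.factorial (2 * a + 2 * b + 8) * Nat.factorial (2 * a + 2 * b + 12) ≠ 0 := by
    refine mul_ne_zero (mul_ne_zero (mul_ne_zero ?_ ?_) ?_) ?_ <;> exact hne _
  rw [← Nat.factorization_le_iff_dvd hbot htop, Finsupp.le_def]
  intro p
  by_cases hp : p.Prime
  · have fm : ∀ x y : ℕ, x ≠ 0 → y ≠ 0 →
        (x * y).factorization p = x.factorization p + y.factorization p := by
      intro x y hx hy
      rw [Nat.factorization_mul hx hy]; rfl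
    rw [fm _ _ (by refine mul_ne_zero (mul_ne_zero (mul_ne_zero ?_ ?_) ?_) ?_ <;> exact hne _)
        (by refine mul_ne_zero (mul_ne_zero (mul_ne_zero ?_ ?_) ?_) ?_ <;> exact hne _),
      fm _ _ (by refine mul_ne_zero (mul_ne_zero ?_ ?_) ?_ <;> exact hne _) (hne _),
      fm _ _ (mul_ne_zero (hne _) (hne _)) (hne _),
      fm _ _ (hne _) (hne _),
      fm _ _ (by refine mul_ne_zero (mul_ne_zero ?_ ?_) ?_ <;> exact hne _) (hne _),
      fm _ _ (mul_ne_zero (hne _) (hne _)) (hne _),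
      fm _ _ (hne _) (hne _),
      fm _ _ (by refine mul_ne_zero (mul_ne_zero ?_ ?_) ?_ <;> exact hne _) (hne _),
      fm _ _ (mul_ne_zero (hne _) (hne _)) (hne _),
      fm _ _ (hne _) (hne _)]
    haveI : Fact p.Prime := ⟨hp⟩
    have hleg : ∀ m : ℕ, m ≤ 2 * a + 2 * b + 12 →
        (Nat.factorial m).factorization p =
          ∑ i ∈ Finset.Ico 1 (2 * a + 2 * b + 13), m / p ^ i := by
      intro m hm
      rw [Nat.factorization_def _ hp]
      exact padicValNat_factorial (lt_of_le_of_lt (Nat.log_le_self p m) (by omega))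
    rw [hleg a (by omega), hleg (a+1) (by omega), hleg (2*a+2) (by omega),
      hleg (2*a+7) (by omega), hleg b (by omega), hleg (b+1) (by omega),
      hleg (2*b+2) (by omega), hleg (2*b+7) (by omega),
      hleg (a+b+2) (by omega), hleg (a+b+4) (by omega),
      hleg (2*a+2*b+8) (by omega), hleg (2*a+2*b+12) (by omega),
      ← Finset.sum_add_distrib, ← Finset.sum_add_distrib, ← Finset.sum_add_distrib,
      ← Finset.sum_add_distrib, ← Finset.sum_add_distrib, ← Finset.sum_add_distrib,
      ← Finset.sum_add_distrib, ← Finset.sum_add_distrib, ← Finset.sum_add_distrib,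
      ← Finset.sum_add_distrib]
    refine Finset.sum_le_sum fun i _ => ?_
    have hpi : 0 < p ^ i := pow_pos hp.pos i
    have := wpd_floor_main (p ^ i) a b hpi
    omega
  · simp [Nat.factorization_eq_zero_of_not_prime _ hp]

/-- Key divisibility for the recurrence coefficients. -/
private lemma wpd_B_dvd (D j k : ℕ) (hj : 2 ≤ j) (hk : 2 ≤ k) :
    (D ^ (j - 1) * 2520 ^ (j - 2) *
        (Nat.factorial (j - 3) * Nat.factorial (j - 2) * Nat.factorial (2 * j - 4) *
          Nat.factorial (2 * j + 1))) *
      (D ^ (k - 1) * 2520 ^ (k - 2) *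
        (Nat.factorial (k - 3) * Nat.factorial (k - 2) * Nat.factorial (2 * k - 4) *
          Nat.factorial (2 * k + 1))) ∣
    3 * (D ^ (j + k - 1) * 2520 ^ (j + k - 2) *
        (Nat.factorial (j + k - 4) * Nat.factorial (j + k - 2) *
          Nat.factorial (2 * (j + k) - 4) * Nat.factorial (2 * (j + k)))) := by
  rcases Nat.lt_or_ge j 3 with hj2 | hj3
  · -- j = 2
    have hj' : j = 2 := by omega
    subst hj'
    obtain ⟨c, rfl⟩ : ∃ c, k = c + 2 := ⟨k - 2, by omega⟩
    rw [show 2 * 2 + 1 = 5 by omega,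
      show c + 2 - 1 = c + 1 by omega, show c + 2 - 2 = c by omega,
      show c + 2 - 3 = c - 1 by omega, show 2 * (c + 2) - 4 = 2 * c by omega,
      show 2 * (c + 2) + 1 = 2 * c + 5 by omega,
      show 2 + (c + 2) - 1 = c + 3 by omega, show 2 + (c + 2) - 2 = c + 2 by omega,
      show 2 + (c + 2) - 4 = c by omega,
      show 2 * (2 + (c + 2)) - 4 = 2 * c + 4 by omega,
      show 2 * (2 + (c + 2)) = 2 * c + 8 by omega,
      show Nat.factorial 5 = 120 from rfl, show (2:ℕ) - 1 = 1 by omega,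
      show (2:ℕ) - 2 = 0 by omega, show Nat.factorial 0 = 1 from rfl]
    have hF : Nat.factorial (c - 1) * Nat.factorial c * Nat.factorial (2 * c) *
        Nat.factorial (2 * c + 5) ∣
        Nat.factorial c * Nat.factorial (c + 2) * Nat.factorial (2 * c + 4) *
          Nat.factorial (2 * c + 8) :=
      mul_dvd_mul (mul_dvd_mul (mul_dvd_mul
        (Nat.factorial_dvd_factorial (by omega)) (Nat.factorial_dvd_factorial (by omega)))
        (Nat.factorial_dvd_factorial (by omega))) (Nat.factorial_dvd_factorial (by omega))
    calc (D ^ 1 * 2520 ^ 0 * (1 * 1 * 1 * 120)) *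
          (D ^ (c + 1) * 2520 ^ c * (Nat.factorial (c - 1) * Nat.factorial c *
            Nat.factorial (2 * c) * Nat.factorial (2 * c + 5)))
        = (120 * D ^ (c + 2) * 2520 ^ c) * (Nat.factorial (c - 1) * Nat.factorial c *
            Nat.factorial (2 * c) * Nat.factorial (2 * c + 5)) := by ring
      _ ∣ (120 * D ^ (c + 2) * 2520 ^ c) * (158760 * D * (Nat.factorial c *
            Nat.factorial (c + 2) * Nat.factorial (2 * c + 4) * Nat.factorial (2 * c + 8))) :=
          mul_dvd_mul_left _ (dvd_trans hF (dvd_mul_left _ _))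
      _ = 3 * (D ^ (c + 3) * 2520 ^ (c + 2) * (Nat.factorial c * Nat.factorial (c + 2) *
            Nat.factorial (2 * c + 4) * Nat.factorial (2 * c + 8))) := by ring
  rcases Nat.lt_or_ge k 3 with hk2 | hk3
  · -- k = 2, j ≥ 3
    have hk' : k = 2 := by omega
    subst hk'
    obtain ⟨a, rfl⟩ : ∃ a, j = a + 3 := ⟨j - 3, by omega⟩
    rw [show 2 * 2 + 1 = 5 by omega,
      show a + 3 - 1 = a + 2 by omega, show a + 3 - 2 = a + 1 by omega,
      show a + 3 - 3 = a by omega, show 2 * (a + 3) - 4 = 2 * a + 2 by omega,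
      show 2 * (a + 3) + 1 = 2 * a + 7 by omega,
      show a + 3 + 2 - 1 = a + 4 by omega, show a + 3 + 2 - 2 = a + 3 by omega,
      show a + 3 + 2 - 4 = a + 1 by omega,
      show 2 * (a + 3 + 2) - 4 = 2 * a + 6 by omega,
      show 2 * (a + 3 + 2) = 2 * a + 10 by omega,
      show Nat.factorial 5 = 120 from rfl, show (2:ℕ) - 1 = 1 by omega,
      show (2:ℕ) - 2 = 0 by omega, show Nat.factorial 0 = 1 from rfl]
    have hF : Nat.factorial a * Nat.factorial (a + 1) * Nat.factorial (2 * a + 2) *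
        Nat.factorial (2 * a + 7) ∣
        Nat.factorial (a + 1) * Nat.factorial (a + 3) * Nat.factorial (2 * a + 6) *
          Nat.factorial (2 * a + 10) :=
      mul_dvd_mul (mul_dvd_mul (mul_dvd_mul
        (Nat.factorial_dvd_factorial (by omega)) (Nat.factorial_dvd_factorial (by omega)))
        (Nat.factorial_dvd_factorial (by omega))) (Nat.factorial_dvd_factorial (by omega))
    calc (D ^ (a + 2) * 2520 ^ (a + 1) * (Nat.factorial a * Nat.factorial (a + 1) *
            Nat.factorial (2 * a + 2) * Nat.factorial (2 * a + 7))) *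
          (D ^ 1 * 2520 ^ 0 * (1 * 1 * 1 * 120))
        = (120 * D ^ (a + 3) * 2520 ^ (a + 1)) * (Nat.factorial a * Nat.factorial (a + 1) *
            Nat.factorial (2 * a + 2) * Nat.factorial (2 * a + 7)) := by ring
      _ ∣ (120 * D ^ (a + 3) * 2520 ^ (a + 1)) * (158760 * D * (Nat.factorial (a + 1) *
            Nat.factorial (a + 3) * Nat.factorial (2 * a + 6) * Nat.factorial (2 * a + 10))) :=
          mul_dvd_mul_left _ (dvd_trans hF (dvd_mul_left _ _))
      _ = 3 * (D ^ (a + 4) * 2520 ^ (a + 3) * (Nat.factorial (a + 1) * Nat.factorial (a + 3) *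
            Nat.factorial (2 * a + 6) * Nat.factorial (2 * a + 10))) := by ring
  · -- j, k ≥ 3
    obtain ⟨a, rfl⟩ : ∃ a, j = a + 3 := ⟨j - 3, by omega⟩
    obtain ⟨b, rfl⟩ : ∃ b, k = b + 3 := ⟨k - 3, by omega⟩
    rw [show a + 3 - 1 = a + 2 by omega, show a + 3 - 2 = a + 1 by omega,
      show a + 3 - 3 = a by omega, show 2 * (a + 3) - 4 = 2 * a + 2 by omega,
      show 2 * (a + 3) + 1 = 2 * a + 7 by omega,
      show b + 3 - 1 = b + 2 by omega, show b + 3 - 2 = b + 1 by omega,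
      show b + 3 - 3 = b by omega, show 2 * (b + 3) - 4 = 2 * b + 2 by omega,
      show 2 * (b + 3) + 1 = 2 * b + 7 by omega,
      show a + 3 + (b + 3) - 1 = a + b + 5 by omega,
      show a + 3 + (b + 3) - 2 = a + b + 4 by omega,
      show a + 3 + (b + 3) - 4 = a + b + 2 by omega,
      show 2 * (a + 3 + (b + 3)) - 4 = 2 * a + 2 * b + 8 by omega,
      show 2 * (a + 3 + (b + 3)) = 2 * a + 2 * b + 12 by omega]
    have hF := wpd_fac_dvd a b
    calc (D ^ (a + 2) * 2520 ^ (a + 1) * (Nat.factorial a * Nat.factorial (a + 1) *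
            Nat.factorial (2 * a + 2) * Nat.factorial (2 * a + 7))) *
          (D ^ (b + 2) * 2520 ^ (b + 1) * (Nat.factorial b * Nat.factorial (b + 1) *
            Nat.factorial (2 * b + 2) * Nat.factorial (2 * b + 7)))
        = (D ^ (a + b + 4) * 2520 ^ (a + b + 2)) *
            ((Nat.factorial a * Nat.factorial (a + 1) * Nat.factorial (2 * a + 2) *
              Nat.factorial (2 * a + 7)) *
             (Nat.factorial b * Nat.factorial (b + 1) * Nat.factorial (2 * b + 2) *
              Nat.factorial (2 * b + 7))) := by ring
      _ ∣ (D ^ (a + b + 4) * 2520 ^ (a + b + 2)) *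
            (Nat.factorial (a + b + 2) * Nat.factorial (a + b + 4) *
              Nat.factorial (2 * a + 2 * b + 8) * Nat.factorial (2 * a + 2 * b + 12)) :=
          mul_dvd_mul_left _ hF
      _ ∣ 3 * (D ^ (a + b + 5) * 2520 ^ (a + b + 4) *
            (Nat.factorial (a + b + 2) * Nat.factorial (a + b + 4) *
              Nat.factorial (2 * a + 2 * b + 8) * Nat.factorial (2 * a + 2 * b + 12))) :=
          ⟨3 * D * 2520 ^ 2, by ring⟩

private lemma wpd_sum_int' {s : Finset ℕ} {f : ℕ → ℚ}
    (h : ∀ j ∈ s, ∃ z : ℤ, f j = z) : ∃ z : ℤ, ∑ j ∈ s, f j = z := by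
  classical
  induction s using Finset.induction_on with
  | empty => exact ⟨0, by simp⟩
  | insert x s hx ih =>
    obtain ⟨z1, hz1⟩ := h _ (Finset.mem_insert_self _ _)
    obtain ⟨z2, hz2⟩ := ih fun j hj => h j (Finset.mem_insert_of_mem hj)
    exact ⟨z1 + z2, by rw [Finset.sum_insert hx, hz1, hz2]; push_cast; ring⟩

theorem weierstrass_coeff_denominator (g2 g3 : ℚ) (p : ℕ → ℚ)
    (h2 : p 2 = g2 / 20) (h3 : p 3 = g3 / 28)
    (hrec : ∀ n : ℕ, 4 ≤ n →
      p n = (3 / (((2 * n + 1 : ℚ)) * ((n : ℚ) - 3))) *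
        ∑ j ∈ Finset.Icc 2 (n - 2), p j * p (n - j))
    (D : ℕ) (hD : 0 < D)
    (hD2 : ∃ z : ℤ, (D : ℚ) * g2 / 20 = z) (hD3 : ∃ z : ℤ, (D : ℚ) * g3 / 28 = z) :
    ∀ n : ℕ, 1 ≤ n → ∃ z : ℤ,
      (D : ℚ) ^ (n + 1) * (2520 : ℚ) ^ n * (Nat.factorial (n - 1) : ℚ) *
        (Nat.factorial n : ℚ) * (Nat.factorial (2 * n) : ℚ) *
        (Nat.factorial (2 * n + 5) : ℚ) * p (n + 2) = z := by
  have key : ∀ m : ℕ, 3 ≤ m → ∃ z : ℤ,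
      ((D ^ (m - 1) * 2520 ^ (m - 2) *
        (Nat.factorial (m - 3) * Nat.factorial (m - 2) * Nat.factorial (2 * m - 4) *
          Nat.factorial (2 * m + 1)) : ℕ) : ℚ) * p m = z := by
    intro m
    induction m using Nat.strong_induction_on with
    | _ m ih =>
    intro hm3
    rcases Nat.lt_or_ge m 4 with h4 | h4
    · -- m = 3
      have hm : m = 3 := by omega
      subst hm
      obtain ⟨z, hz⟩ := hD3
      refine ⟨2520 * 2 * 5040 * D * z, ?_⟩
      rw [h3]
      norm_num [Nat.factorial]
      push_cast
      have h28 : (28 : ℚ) ≠ 0 := by norm_num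
      field_simp at hz ⊢
      linear_combination (25401600 : ℚ) * hz
    · -- m ≥ 4
      have hX : ∀ t, 2 ≤ t → t < m → ∃ z : ℤ,
          ((D ^ (t - 1) * 2520 ^ (t - 2) *
            (Nat.factorial (t - 3) * Nat.factorial (t - 2) * Nat.factorial (2 * t - 4) *
              Nat.factorial (2 * t + 1)) : ℕ) : ℚ) * p t = z := by
        intro t ht2 htm
        rcases Nat.lt_or_ge t 3 with ht3 | ht3
        · have ht : t = 2 := by omega
          subst ht
          obtain ⟨z, hz⟩ := hD2
          refine ⟨120 * z, ?_⟩
          rw [h2]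
          norm_num [Nat.factorial]
          push_cast
          field_simp at hz ⊢
          linear_combination hz
        · exact ih t htm ht3
      have hterm : ∀ j ∈ Finset.Icc 2 (m - 2), ∃ z : ℤ,
          ((3 * (D ^ (m - 1) * 2520 ^ (m - 2) *
            (Nat.factorial (m - 4) * Nat.factorial (m - 2) * Nat.factorial (2 * m - 4) *
              Nat.factorial (2 * m)) ) : ℕ) : ℚ) * (p j * p (m - j)) = z := by
        intro j hj
        rw [Finset.mem_Icc] at hj
        obtain ⟨k, hk2, rfl⟩ : ∃ k, 2 ≤ k ∧ j + k = m := ⟨m - j, by omega, by omega⟩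
        rw [show j + k - j = k by omega]
        obtain ⟨zj, hzj⟩ := hX j hj.1 (by omega)
        obtain ⟨zk, hzk⟩ := hX k hk2 (by omega)
        obtain ⟨c, hc⟩ := wpd_B_dvd D j k hj.1 hk2
        refine ⟨c * zj * zk, ?_⟩
        have hc' : ((3 * (D ^ (j + k - 1) * 2520 ^ (j + k - 2) *
            (Nat.factorial (j + k - 4) * Nat.factorial (j + k - 2) *
              Nat.factorial (2 * (j + k) - 4) * Nat.factorial (2 * (j + k)))) : ℕ) : ℚ)
            = ((D ^ (j - 1) * 2520 ^ (j - 2) *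
                (Nat.factorial (j - 3) * Nat.factorial (j - 2) * Nat.factorial (2 * j - 4) *
                  Nat.factorial (2 * j + 1)) : ℕ) : ℚ) *
              ((D ^ (k - 1) * 2520 ^ (k - 2) *
                (Nat.factorial (k - 3) * Nat.factorial (k - 2) * Nat.factorial (2 * k - 4) *
                  Nat.factorial (2 * k + 1)) : ℕ) : ℚ) * (c : ℚ) := by
          rw [hc]; push_cast; ring
        calc ((3 * (D ^ (j + k - 1) * 2520 ^ (j + k - 2) *
            (Nat.factorial (j + k - 4) * Nat.factorial (j + k - 2) *
              Nat.factorial (2 * (j + k) - 4) * Nat.factorial (2 * (j + k)))) : ℕ) : ℚ) *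
              (p j * p k)
            = (c : ℚ) * (((D ^ (j - 1) * 2520 ^ (j - 2) *
                (Nat.factorial (j - 3) * Nat.factorial (j - 2) * Nat.factorial (2 * j - 4) *
                  Nat.factorial (2 * j + 1)) : ℕ) : ℚ) * p j) *
              (((D ^ (k - 1) * 2520 ^ (k - 2) *
                (Nat.factorial (k - 3) * Nat.factorial (k - 2) * Nat.factorial (2 * k - 4) *
                  Nat.factorial (2 * k + 1)) : ℕ) : ℚ) * p k) := by
              rw [hc']; ring
          _ = ((c * zj * zk : ℤ) : ℚ) := by rw [hzj, hzk]; push_cast; ring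
      obtain ⟨Z, hZ⟩ := wpd_sum_int' hterm
      refine ⟨Z, ?_⟩
      rw [hrec m h4, ← hZ, ← Finset.mul_sum]
      have hmQ : (4 : ℚ) ≤ (m : ℚ) := by exact_mod_cast h4
      have hne1 : (2 * (m : ℚ) + 1) ≠ 0 := by positivity
      have hne2 : ((m : ℚ) - 3) ≠ 0 := by
        intro h; rw [sub_eq_zero] at h; rw [h] at hmQ; norm_num at hmQ
      have hfac1 : Nat.factorial (m - 3) = (m - 3) * Nat.factorial (m - 4) := by
        rw [show m - 3 = (m - 4) + 1 by omega, Nat.factorial_succ]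
      have hfac2 : Nat.factorial (2 * m + 1) = (2 * m + 1) * Nat.factorial (2 * m) :=
        Nat.factorial_succ _
      have hcast : ((m - 3 : ℕ) : ℚ) = (m : ℚ) - 3 := by
        push_cast [Nat.cast_sub (by omega : 3 ≤ m)]; ring
      have hcoef : ((D ^ (m - 1) * 2520 ^ (m - 2) *
          (Nat.factorial (m - 3) * Nat.factorial (m - 2) * Nat.factorial (2 * m - 4) *
            Nat.factorial (2 * m + 1)) : ℕ) : ℚ) * (3 / ((2 * (m : ℚ) + 1) * ((m : ℚ) - 3)))
          = ((3 * (D ^ (m - 1) * 2520 ^ (m - 2) *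
            (Nat.factorial (m - 4) * Nat.factorial (m - 2) * Nat.factorial (2 * m - 4) *
              Nat.factorial (2 * m)) ) : ℕ) : ℚ) := by
        rw [hfac1, hfac2]
        field_simp
        push_cast [hcast]
        ring
      calc ((D ^ (m - 1) * 2520 ^ (m - 2) *
          (Nat.factorial (m - 3) * Nat.factorial (m - 2) * Nat.factorial (2 * m - 4) *
            Nat.factorial (2 * m + 1)) : ℕ) : ℚ) *
            (3 / ((2 * (m : ℚ) + 1) * ((m : ℚ) - 3)) *
              ∑ j ∈ Finset.Icc 2 (m - 2), p j * p (m - j))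
          = (((D ^ (m - 1) * 2520 ^ (m - 2) *
          (Nat.factorial (m - 3) * Nat.factorial (m - 2) * Nat.factorial (2 * m - 4) *
            Nat.factorial (2 * m + 1)) : ℕ) : ℚ) * (3 / ((2 * (m : ℚ) + 1) * ((m : ℚ) - 3)))) *
              ∑ j ∈ Finset.Icc 2 (m - 2), p j * p (m - j) := by ring
        _ = ((3 * (D ^ (m - 1) * 2520 ^ (m - 2) *
            (Nat.factorial (m - 4) * Nat.factorial (m - 2) * Nat.factorial (2 * m - 4) *
              Nat.factorial (2 * m)) ) : ℕ) : ℚ) *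
              ∑ j ∈ Finset.Icc 2 (m - 2), p j * p (m - j) := by rw [hcoef]
  intro n hn
  obtain ⟨z, hz⟩ := key (n + 2) (by omega)
  refine ⟨z, ?_⟩
  rw [show n + 2 - 1 = n + 1 by omega, show n + 2 - 2 = n by omega,
    show n + 2 - 3 = n - 1 by omega, show 2 * (n + 2) - 4 = 2 * n by omega,
    show 2 * (n + 2) + 1 = 2 * n + 5 by omega] at hz
  push_cast at hz
  linear_combination hz
end

section
/- Let α, β, γ, δ be rationals and u₀, u₁ rationals; set u₂ = -δ u₀³ - 3γ u₀² - β u₀/2 - α/2 and for n ≥ 2 define u_{n+1} = (1/(n(n+1))) ( 2δ Σ_{j₁+j₂+j₃=n-1, 0≤j_i≤n-1} u_{j₁} u_{j₂} u_{j₃} + 6γ Σ_{j₁+j₂=n-1, 0≤j_i≤n-1} u_{j₁} u_{j₂} - 2β u_{n-1} - 2δ u_{n-2} ). Let C be a common denominator of 2δ, 6γ, 2β and D a common denominator of u₀, u₁, u₂. Then for all n ≥ 2, C^n · D^{2n+1} · (n-1)! · (n!)³ · u_n is an integer. -/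
open Nat

private def Iz (q : ℚ) : Prop := ∃ z : ℤ, q = (z : ℚ)

private lemma Iz_zero : Iz 0 := ⟨0, by norm_num⟩

private lemma Iz_add {a b : ℚ} (ha : Iz a) (hb : Iz b) : Iz (a + b) := by
  obtain ⟨x, hx⟩ := ha; obtain ⟨y, hy⟩ := hb
  exact ⟨x + y, by rw [hx, hy]; push_cast; ring⟩

private lemma Iz_sub {a b : ℚ} (ha : Iz a) (hb : Iz b) : Iz (a - b) := by
  obtain ⟨x, hx⟩ := ha; obtain ⟨y, hy⟩ := hb
  exact ⟨x - y, by rw [hx, hy]; push_cast; ring⟩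

private lemma Iz_sum {ι : Type*} (s : Finset ι) (f : ι → ℚ) (h : ∀ i ∈ s, Iz (f i)) :
    Iz (∑ i ∈ s, f i) :=
  Finset.sum_induction f Iz (fun _ _ => Iz_add) Iz_zero h

private lemma pair_dvd (j1 j2 k : ℕ) (h : j1 + j2 = k + 1) :
    ((j1-1)! * (j2-1)!) * (j1 ! * j2 !)^3 ∣ (k+1)! * ((k+2)! * ((k+3)!)^2) := by
  have h1 : j1 ! * j2 ! ∣ (k+1)! := by
    rw [← h]; exact Nat.factorial_mul_factorial_dvd_factorial_add j1 j2
  have h0 : (j1-1)! * (j2-1)! ∣ j1 ! * j2 ! :=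
    mul_dvd_mul (Nat.factorial_dvd_factorial (Nat.sub_le _ _))
      (Nat.factorial_dvd_factorial (Nat.sub_le _ _))
  calc ((j1-1)! * (j2-1)!) * (j1 ! * j2 !)^3
      ∣ (j1 ! * j2 !) * (j1 ! * j2 !)^3 := mul_dvd_mul_right h0 _
    _ = (j1 ! * j2 !)^4 := by ring
    _ ∣ ((k+1)!)^4 := pow_dvd_pow_of_dvd h1 4
    _ = (k+1)! * ((k+1)! * ((k+1)!)^2) := by ring
    _ ∣ (k+1)! * ((k+2)! * ((k+3)!)^2) :=
        mul_dvd_mul_left _ (mul_dvd_mul (Nat.factorial_dvd_factorial (by omega))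
          (pow_dvd_pow_of_dvd (Nat.factorial_dvd_factorial (by omega)) 2))

private lemma triple_dvd (j1 j2 j3 k : ℕ) (h : j1 + j2 + j3 = k + 1) :
    ((j1-1)! * (j2-1)! * (j3-1)!) * (j1 ! * j2 ! * j3 !)^3 ∣ (k+1)! * ((k+2)! * ((k+3)!)^2) := by
  have h1 : j1 ! * j2 ! * j3 ! ∣ (k+1)! := by
    rw [← h]
    exact (mul_dvd_mul_right (Nat.factorial_mul_factorial_dvd_factorial_add j1 j2) _).trans
      (Nat.factorial_mul_factorial_dvd_factorial_add (j1+j2) j3)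
  have h0 : (j1-1)! * (j2-1)! * (j3-1)! ∣ j1 ! * j2 ! * j3 ! :=
    mul_dvd_mul (mul_dvd_mul (Nat.factorial_dvd_factorial (Nat.sub_le _ _))
      (Nat.factorial_dvd_factorial (Nat.sub_le _ _)))
      (Nat.factorial_dvd_factorial (Nat.sub_le _ _))
  calc ((j1-1)! * (j2-1)! * (j3-1)!) * (j1 ! * j2 ! * j3 !)^3
      ∣ (j1 ! * j2 ! * j3 !) * (j1 ! * j2 ! * j3 !)^3 := mul_dvd_mul_right h0 _
    _ = (j1 ! * j2 ! * j3 !)^4 := by ring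
    _ ∣ ((k+1)!)^4 := pow_dvd_pow_of_dvd h1 4
    _ = (k+1)! * ((k+1)! * ((k+1)!)^2) := by ring
    _ ∣ (k+1)! * ((k+2)! * ((k+3)!)^2) :=
        mul_dvd_mul_left _ (mul_dvd_mul (Nat.factorial_dvd_factorial (by omega))
          (pow_dvd_pow_of_dvd (Nat.factorial_dvd_factorial (by omega)) 2))

private lemma single1_dvd (k : ℕ) : k ! * ((k+1)!)^3 ∣ (k+1)! * ((k+2)! * ((k+3)!)^2) := by
  calc k ! * ((k+1)!)^3 = k ! * ((k+1)! * ((k+1)!)^2) := by ring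
    _ ∣ (k+1)! * ((k+2)! * ((k+3)!)^2) :=
        mul_dvd_mul (Nat.factorial_dvd_factorial (by omega))
          (mul_dvd_mul (Nat.factorial_dvd_factorial (by omega))
            (pow_dvd_pow_of_dvd (Nat.factorial_dvd_factorial (by omega)) 2))

private lemma single2_dvd (k : ℕ) : (k-1)! * (k !)^3 ∣ (k+1)! * ((k+2)! * ((k+3)!)^2) := by
  calc (k-1)! * (k !)^3 = (k-1)! * (k ! * (k !)^2) := by ring
    _ ∣ (k+1)! * ((k+2)! * ((k+3)!)^2) :=
        mul_dvd_mul (Nat.factorial_dvd_factorial (by omega))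
          (mul_dvd_mul (Nat.factorial_dvd_factorial (by omega))
            (pow_dvd_pow_of_dvd (Nat.factorial_dvd_factorial (by omega)) 2))

theorem painleve_coeff_denominator (α β γ δ : ℚ) (u : ℕ → ℚ)
    (h2 : u 2 = -δ * (u 0) ^ 3 - 3 * γ * (u 0) ^ 2 - β * u 0 / 2 - α / 2)
    (hrec : ∀ n : ℕ, 2 ≤ n →
      u (n + 1) = (1 / ((n : ℚ) * (n + 1))) *
        (2 * δ * (∑ j ∈ Finset.range n ×ˢ Finset.range n ×ˢ Finset.range n,
            if j.1 + j.2.1 + j.2.2 = n - 1 then u j.1 * u j.2.1 * u j.2.2 else 0)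
          + 6 * γ * (∑ j ∈ Finset.range n ×ˢ Finset.range n,
            if j.1 + j.2 = n - 1 then u j.1 * u j.2 else 0)
          - 2 * β * u (n - 1) - 2 * δ * u (n - 2)))
    (C D : ℕ) (hC : 0 < C) (hD : 0 < D)
    (hCδ : ∃ z : ℤ, (C : ℚ) * (2 * δ) = z) (hCγ : ∃ z : ℤ, (C : ℚ) * (6 * γ) = z)
    (hCβ : ∃ z : ℤ, (C : ℚ) * (2 * β) = z)
    (hD0 : ∃ z : ℤ, (D : ℚ) * u 0 = z) (hD1 : ∃ z : ℤ, (D : ℚ) * u 1 = z)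
    (hD2 : ∃ z : ℤ, (D : ℚ) * u 2 = z) :
    ∀ n : ℕ, 2 ≤ n → ∃ z : ℤ,
      (C : ℚ) ^ n * (D : ℚ) ^ (2 * n + 1) * (Nat.factorial (n - 1) : ℚ) *
        (Nat.factorial n : ℚ) ^ 3 * u n = z := by
  have key : ∀ n : ℕ, Iz ((C : ℚ) ^ n * (D : ℚ) ^ (2 * n + 1) * (Nat.factorial (n - 1) : ℚ) *
      (Nat.factorial n : ℚ) ^ 3 * u n) := by
    intro n
    induction n using Nat.strong_induction_on with
    | _ n ih =>
      match n, ih with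
      | 0, _ =>
        obtain ⟨z, hz⟩ := hD0
        exact ⟨z, by norm_num [Nat.factorial]; linarith [hz]⟩
      | 1, _ =>
        obtain ⟨z, hz⟩ := hD1
        refine ⟨(C:ℤ) * D^2 * z, ?_⟩
        norm_num [Nat.factorial]
        linear_combination (C:ℚ) * (D:ℚ)^2 * hz
      | 2, _ =>
        obtain ⟨z, hz⟩ := hD2
        refine ⟨(C:ℤ)^2 * D^4 * 8 * z, ?_⟩
        norm_num [Nat.factorial]
        linear_combination (C:ℚ)^2 * (D:ℚ)^4 * 8 * hz
      | (k+3), ih =>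
        have hr := hrec (k+2) (by omega)
        simp only [show k+2+1 = k+3 from by omega, show k+2-1 = k+1 from by omega,
          show k+2-2 = k from by omega] at hr
        simp only [show k+3-1 = k+2 from by omega]
        -- the main multiplier
        have hmain : Iz (
            ((C:ℚ)^(k+3) * (D:ℚ)^(2*(k+3)+1) * (((k+1)! : ℕ):ℚ) * (((k+2)! : ℕ):ℚ) *
              ((((k+3)! : ℕ):ℚ))^2) * (2*δ*(∑ j ∈ Finset.range (k+2) ×ˢ Finset.range (k+2) ×ˢ Finset.range (k+2),
                if j.1 + j.2.1 + j.2.2 = k+1 then u j.1 * u j.2.1 * u j.2.2 else 0))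
          + ((C:ℚ)^(k+3) * (D:ℚ)^(2*(k+3)+1) * (((k+1)! : ℕ):ℚ) * (((k+2)! : ℕ):ℚ) *
              ((((k+3)! : ℕ):ℚ))^2) * (6*γ*(∑ j ∈ Finset.range (k+2) ×ˢ Finset.range (k+2),
                if j.1 + j.2 = k+1 then u j.1 * u j.2 else 0))
          - ((C:ℚ)^(k+3) * (D:ℚ)^(2*(k+3)+1) * (((k+1)! : ℕ):ℚ) * (((k+2)! : ℕ):ℚ) *
              ((((k+3)! : ℕ):ℚ))^2) * (2*β*u (k+1))
          - ((C:ℚ)^(k+3) * (D:ℚ)^(2*(k+3)+1) * (((k+1)! : ℕ):ℚ) * (((k+2)! : ℕ):ℚ) *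
              ((((k+3)! : ℕ):ℚ))^2) * (2*δ*u k)) := by
          refine Iz_sub (Iz_sub (Iz_add ?_ ?_) ?_) ?_
          · -- triple sum
            rw [Finset.mul_sum, Finset.mul_sum]
            refine Iz_sum _ _ ?_
            rintro ⟨j1, j2, j3⟩ hj
            dsimp only
            split_ifs with hcond
            · obtain ⟨zd, hzd⟩ := hCδ
              obtain ⟨m, hm⟩ := triple_dvd j1 j2 j3 k hcond
              obtain ⟨z1, hz1⟩ := ih j1 (by omega)
              obtain ⟨z2, hz2⟩ := ih j2 (by omega)
              obtain ⟨z3, hz3⟩ := ih j3 (by omega)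
              refine ⟨zd * (C:ℤ) * (D:ℤ)^2 * m * z1 * z2 * z3, ?_⟩
              have hm' : (((k+1)! * ((k+2)! * ((k+3)!)^2) : ℕ) : ℚ)
                  = ((((j1-1)! * (j2-1)! * (j3-1)!) * (j1 ! * j2 ! * j3 !)^3 * m : ℕ) : ℚ) := by
                exact_mod_cast hm
              push_cast at hm' ⊢
              rw [show (C:ℚ)^(k+3) = (C:ℚ)^j1 * ((C:ℚ)^j2 * ((C:ℚ)^j3 * (C:ℚ)^2)) from by
                  rw [← pow_add, ← pow_add, ← pow_add]; congr 1; omega,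
                show (D:ℚ)^(2*(k+3)+1) = (D:ℚ)^(2*j1+1) * ((D:ℚ)^(2*j2+1) * ((D:ℚ)^(2*j3+1) * (D:ℚ)^2)) from by
                  rw [← pow_add, ← pow_add, ← pow_add]; congr 1; omega,
                ← hzd, ← hz1, ← hz2, ← hz3]
              linear_combination ((C:ℚ)^j1 * (C:ℚ)^j2 * (C:ℚ)^j3 * (C:ℚ)^2 * (D:ℚ)^(2*j1+1)
                * (D:ℚ)^(2*j2+1) * (D:ℚ)^(2*j3+1) * (D:ℚ)^2 * (2*δ)
                * (u j1 * u j2 * u j3)) * hm'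
            · simp only [mul_zero]; exact Iz_zero
          · -- pair sum
            rw [Finset.mul_sum, Finset.mul_sum]
            refine Iz_sum _ _ ?_
            rintro ⟨j1, j2⟩ hj
            dsimp only
            split_ifs with hcond
            · obtain ⟨zg, hzg⟩ := hCγ
              obtain ⟨m, hm⟩ := pair_dvd j1 j2 k hcond
              obtain ⟨z1, hz1⟩ := ih j1 (by omega)
              obtain ⟨z2, hz2⟩ := ih j2 (by omega)
              refine ⟨zg * (C:ℤ) * (D:ℤ)^3 * m * z1 * z2, ?_⟩
              have hm' : (((k+1)! * ((k+2)! * ((k+3)!)^2) : ℕ) : ℚ)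
                  = ((((j1-1)! * (j2-1)!) * (j1 ! * j2 !)^3 * m : ℕ) : ℚ) := by
                exact_mod_cast hm
              push_cast at hm' ⊢
              rw [show (C:ℚ)^(k+3) = (C:ℚ)^j1 * ((C:ℚ)^j2 * (C:ℚ)^2) from by
                  rw [← pow_add, ← pow_add]; congr 1; omega,
                show (D:ℚ)^(2*(k+3)+1) = (D:ℚ)^(2*j1+1) * ((D:ℚ)^(2*j2+1) * (D:ℚ)^3) from by
                  rw [← pow_add, ← pow_add]; congr 1; omega,
                ← hzg, ← hz1, ← hz2]
              linear_combination ((C:ℚ)^j1 * (C:ℚ)^j2 * (C:ℚ)^2 * (D:ℚ)^(2*j1+1)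
                * (D:ℚ)^(2*j2+1) * (D:ℚ)^3 * (6*γ) * (u j1 * u j2)) * hm'
            · simp only [mul_zero]; exact Iz_zero
          · -- beta term
            obtain ⟨zb, hzb⟩ := hCβ
            obtain ⟨m, hm⟩ := single1_dvd k
            obtain ⟨z1, hz1⟩ := ih (k+1) (by omega)
            simp only [Nat.add_sub_cancel] at hz1
            refine ⟨zb * (C:ℤ) * (D:ℤ)^4 * m * z1, ?_⟩
            have hm' : (((k+1)! * ((k+2)! * ((k+3)!)^2) : ℕ) : ℚ)
                = ((k ! * ((k+1)!)^3 * m : ℕ) : ℚ) := by exact_mod_cast hm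
            push_cast at hm' ⊢
            rw [show (C:ℚ)^(k+3) = (C:ℚ)^(k+1) * (C:ℚ)^2 from by rw [← pow_add],
              show (D:ℚ)^(2*(k+3)+1) = (D:ℚ)^(2*(k+1)+1) * (D:ℚ)^4 from by
                rw [show 2*(k+3)+1 = (2*(k+1)+1)+4 from by omega, pow_add],
              ← hzb, ← hz1]
            linear_combination ((C:ℚ)^(k+1) * (C:ℚ)^2 * (D:ℚ)^(2*(k+1)+1) * (D:ℚ)^4
              * (2*β) * u (k+1)) * hm'
          · -- delta single term
            obtain ⟨zd, hzd⟩ := hCδ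
            obtain ⟨m, hm⟩ := single2_dvd k
            obtain ⟨z1, hz1⟩ := ih k (by omega)
            refine ⟨zd * (C:ℤ)^2 * (D:ℤ)^6 * m * z1, ?_⟩
            have hm' : (((k+1)! * ((k+2)! * ((k+3)!)^2) : ℕ) : ℚ)
                = (((k-1)! * (k !)^3 * m : ℕ) : ℚ) := by exact_mod_cast hm
            push_cast at hm' ⊢
            rw [show (C:ℚ)^(k+3) = (C:ℚ)^k * (C:ℚ)^3 from by rw [← pow_add],
              show (D:ℚ)^(2*(k+3)+1) = (D:ℚ)^(2*k+1) * (D:ℚ)^6 from by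
                rw [show 2*(k+3)+1 = (2*k+1)+6 from by omega, pow_add],
              ← hzd, ← hz1]
            linear_combination ((C:ℚ)^k * (C:ℚ)^3 * (D:ℚ)^(2*k+1) * (D:ℚ)^6
              * (2*δ) * u k) * hm'
        obtain ⟨z, hz⟩ := hmain
        refine ⟨z, ?_⟩
        rw [hr, ← hz]
        have hf3 : (((k+3)! : ℕ) : ℚ) = ((k:ℚ)+3) * (((k+2)! : ℕ):ℚ) := by
          rw [show k+3 = (k+2)+1 from rfl, Nat.factorial_succ]; push_cast; ring
        have hf2 : (((k+2)! : ℕ) : ℚ) = ((k:ℚ)+2) * (((k+1)! : ℕ):ℚ) := by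
          rw [show k+2 = (k+1)+1 from rfl, Nat.factorial_succ]; push_cast; ring
        have hx : ((k+2:ℕ):ℚ) = (k:ℚ)+2 := by push_cast; ring
        rw [hx, hf3, hf2]
        have hne1 : ((k:ℚ)+2) ≠ 0 := by positivity
        have hne2 : ((k:ℚ)+2)+1 ≠ 0 := by positivity
        field_simp
        ring
  exact fun n _ => key n
end

section
/- Let s ≥ 1, let a₁,…,a_s be positive integers and b₁,…,b_s integers with a_i n + b_i > 0 for all n ≥ N. Let p be a prime with p ≥ 2(b_i - a_i) for all i. Let k ≥ 2, σ ≥ 0, and non-negative integers j₁,…,j_k with j₁+⋯+j_k = n - σ and a_i j_t + b_i - a_i ≥ 0 for all t and i. Then v_p( Π_{i=1}^{s} (a_i n + a_i)! (a_i n + b_i - 1)! / Π_{t=1}^{k} [(a_i j_t)! (a_i j_t + b_i - a_i)!] ) ≥ 2 Σ_{i=1}^{s} v_p( (a_i - 1)! (a_i σ)! ). -/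
open Finset

private lemma div_add_div_le' (q x y : ℕ) : x / q + y / q ≤ (x + y) / q := by
  rcases Nat.eq_zero_or_pos q with rfl | hq
  · simp
  rw [Nat.le_div_iff_mul_le hq, add_mul]
  exact Nat.add_le_add (Nat.div_mul_le_self _ _) (Nat.div_mul_le_self _ _)

private lemma sum_div_le' {k : ℕ} (q : ℕ) (x : Fin k → ℕ) :
    ∑ t, x t / q ≤ (∑ t, x t) / q := by
  rcases Nat.eq_zero_or_pos q with rfl | hq
  · simp
  rw [Nat.le_div_iff_mul_le hq, Finset.sum_mul]
  exact Finset.sum_le_sum fun t _ => Nat.div_mul_le_self _ _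

private lemma carry_bound₁ (q c S E : ℕ) (hq : 0 < q) (hc : 2 * c ≤ q)
    (hSE : E * (q - c) ≤ S) : E / 2 ≤ S / q := by
  rw [Nat.le_div_iff_mul_le hq]
  have ha : 2 * (E / 2 * q) ≤ E * q := by
    have h : 2 * (E / 2) ≤ E := by omega
    calc 2 * (E / 2 * q) = (2 * (E / 2)) * q := by ring
      _ ≤ E * q := Nat.mul_le_mul_right _ h
  have hb : E * q ≤ 2 * (E * (q - c)) := by
    calc E * q ≤ E * (2 * (q - c)) := Nat.mul_le_mul_left _ (by omega)
      _ = 2 * (E * (q - c)) := by ring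
  linarith

private lemma carry_bound₂ (q c S E : ℕ) (hq : 0 < q) (hc : 2 * c ≤ q)
    (hSE : E * (q - c) ≤ S) : (E + 1) / 2 ≤ (S + c) / q := by
  rcases Nat.eq_zero_or_pos E with rfl | hE1
  · simp
  rw [Nat.le_div_iff_mul_le hq]
  obtain ⟨G, rfl⟩ : ∃ G, E = G + 1 := ⟨E - 1, by omega⟩
  obtain ⟨Q, hQ, hcQ⟩ : ∃ Q, q = Q + c ∧ c ≤ Q := ⟨q - c, by omega, by omega⟩
  have hGc : G * c ≤ G * Q := Nat.mul_le_mul_left _ hcQ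
  have h6 : (G + 2) * q ≤ 2 * ((G + 1) * (q - c)) + 2 * c := by
    have hqc : q - c = Q := by omega
    rw [hqc, hQ]
    calc (G + 2) * (Q + c) = (G * Q + 2 * Q) + (G * c + 2 * c) := by ring
      _ ≤ (G * Q + 2 * Q) + (G * Q + 2 * c) :=
          Nat.add_le_add_left (Nat.add_le_add_right hGc _) _
      _ = 2 * ((G + 1) * Q) + 2 * c := by ring
  have h7 : 2 * ((G + 1 + 1) / 2 * q) ≤ (G + 2) * q := by
    have h : 2 * ((G + 1 + 1) / 2) ≤ G + 2 := by omega
    calc 2 * ((G + 1 + 1) / 2 * q) = (2 * ((G + 1 + 1) / 2)) * q := by ring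
      _ ≤ (G + 2) * q := Nat.mul_le_mul_right _ h
  linarith

private lemma perq_pos {k : ℕ} (q c A1 A2 : ℕ) (hq : 0 < q) (hc : 2 * c ≤ q)
    (x : Fin k → ℕ) :
    (∑ t, (x t / q + (x t + c) / q)) + 2 * (A1 / q + A2 / q)
      ≤ (∑ t, x t + A2 + A1 + 1) / q + (∑ t, x t + A2 + A1 + c) / q := by
  have hcq : c ≤ q := by omega
  have hdec : ∀ t : Fin k, (x t + c) / q = x t / q + (x t % q + c) / q := by
    intro t
    conv_lhs => rw [show x t + c = q * (x t / q) + (x t % q + c) by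
      rw [← add_assoc, Nat.div_add_mod]]
    rw [Nat.mul_add_div hq]
  have hsum1 : (∑ t, (x t / q + (x t + c) / q))
      = 2 * (∑ t, x t / q) + ∑ t, (x t % q + c) / q := by
    rw [Finset.sum_congr rfl fun t _ => by rw [hdec t]]
    rw [Finset.sum_add_distrib, Finset.sum_add_distrib]
    ring
  have hX : ∑ t, x t = q * (∑ t, x t / q) + ∑ t, x t % q := by
    rw [Finset.mul_sum, ← Finset.sum_add_distrib]
    exact Finset.sum_congr rfl fun t _ => (Nat.div_add_mod _ _).symm
  have hr1 : (∑ t, x t + A2 + A1 + 1) / q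
      = (∑ t, x t / q) + ((∑ t, x t % q) + A2 + A1 + 1) / q := by
    rw [show ∑ t, x t + A2 + A1 + 1
        = q * (∑ t, x t / q) + ((∑ t, x t % q) + A2 + A1 + 1) by rw [hX]; ring,
      Nat.mul_add_div hq]
  have hr2 : (∑ t, x t + A2 + A1 + c) / q
      = (∑ t, x t / q) + ((∑ t, x t % q) + A2 + A1 + c) / q := by
    rw [show ∑ t, x t + A2 + A1 + c
        = q * (∑ t, x t / q) + ((∑ t, x t % q) + A2 + A1 + c) by rw [hX]; ring,
      Nat.mul_add_div hq]
  rw [hsum1, hr1, hr2]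
  have hSE : (∑ t, (x t % q + c) / q) * (q - c) ≤ ∑ t, x t % q := by
    rw [Finset.sum_mul]
    refine Finset.sum_le_sum fun t _ => ?_
    have h1 : x t % q < q := Nat.mod_lt _ hq
    have h2 : (x t % q + c) / q < 2 := by
      rw [Nat.div_lt_iff_lt_mul hq]; omega
    have h4 : (x t % q + c) / q = 0 ∨ (x t % q + c) / q = 1 := by
      revert h2; generalize (x t % q + c) / q = e; omega
    rcases h4 with h | h
    · simp [h]
    · have h3 : q ≤ x t % q + c := (Nat.one_le_div_iff hq).mp (by omega)
      rw [h]; omega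
  have h1 := carry_bound₁ q c (∑ t, x t % q) (∑ t, (x t % q + c) / q) hq hc hSE
  have h2 := carry_bound₂ q c (∑ t, x t % q) (∑ t, (x t % q + c) / q) hq hc hSE
  have h3 : (∑ t, x t % q) / q + A2 / q + A1 / q
      ≤ ((∑ t, x t % q) + A2 + A1 + 1) / q := by
    calc (∑ t, x t % q) / q + A2 / q + A1 / q
        ≤ ((∑ t, x t % q) + A2) / q + A1 / q :=
          Nat.add_le_add_right (div_add_div_le' q _ _) _
      _ ≤ ((∑ t, x t % q) + A2 + A1) / q := div_add_div_le' q _ _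
      _ ≤ ((∑ t, x t % q) + A2 + A1 + 1) / q := Nat.div_le_div_right (by omega)
  have h4 : ((∑ t, x t % q) + c) / q + A2 / q + A1 / q
      ≤ ((∑ t, x t % q) + A2 + A1 + c) / q := by
    calc ((∑ t, x t % q) + c) / q + A2 / q + A1 / q
        ≤ ((∑ t, x t % q) + c + A2) / q + A1 / q :=
          Nat.add_le_add_right (div_add_div_le' q _ _) _
      _ ≤ ((∑ t, x t % q) + c + A2 + A1) / q := div_add_div_le' q _ _
      _ = ((∑ t, x t % q) + A2 + A1 + c) / q := by ring_nf
  have h5 : (∑ t, (x t % q + c) / q)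
      ≤ (∑ t, (x t % q + c) / q) / 2 + ((∑ t, (x t % q + c) / q) + 1) / 2 := by
    omega
  linarith

private lemma perq_neg {k : ℕ} (q d A1 A2 : ℕ) (hk : 0 < k)
    (x : Fin k → ℕ) (hx : ∀ t, d ≤ x t) :
    (∑ t, (x t / q + (x t - d) / q)) + 2 * (A1 / q + A2 / q)
      ≤ (∑ t, x t + A2 + A1 + 1) / q + (∑ t, x t + A2 + A1 - d) / q := by
  have hdX : d ≤ ∑ t, x t := le_trans (hx ⟨0, hk⟩) (Finset.single_le_sum (f := x)
    (fun t _ => Nat.zero_le _) (Finset.mem_univ _))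
  have hY : ∑ t, (x t - d) ≤ (∑ t, x t) - d := by
    have e1 : (x ⟨0, hk⟩ - d) + ∑ t ∈ Finset.univ.erase (⟨0, hk⟩ : Fin k), (x t - d)
        = ∑ t, (x t - d) :=
      Finset.add_sum_erase Finset.univ (fun t => x t - d) (Finset.mem_univ (⟨0, hk⟩ : Fin k))
    have e2 : x ⟨0, hk⟩ + ∑ t ∈ Finset.univ.erase (⟨0, hk⟩ : Fin k), x t = ∑ t, x t :=
      Finset.add_sum_erase Finset.univ x (Finset.mem_univ (⟨0, hk⟩ : Fin k))
    have e3 : ∑ t ∈ Finset.univ.erase (⟨0, hk⟩ : Fin k), (x t - d)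
        ≤ ∑ t ∈ Finset.univ.erase (⟨0, hk⟩ : Fin k), x t :=
      Finset.sum_le_sum fun t _ => Nat.sub_le _ _
    have := hx ⟨0, hk⟩
    omega
  rw [Finset.sum_add_distrib]
  have t1 : ∑ t, x t / q + A1 / q + A2 / q ≤ (∑ t, x t + A2 + A1 + 1) / q := by
    calc ∑ t, x t / q + A1 / q + A2 / q ≤ (∑ t, x t) / q + A1 / q + A2 / q :=
          Nat.add_le_add_right (Nat.add_le_add_right (sum_div_le' q x) _) _
      _ ≤ ((∑ t, x t) + A1) / q + A2 / q :=
          Nat.add_le_add_right (div_add_div_le' q _ _) _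
      _ ≤ ((∑ t, x t) + A1 + A2) / q := div_add_div_le' q _ _
      _ ≤ (∑ t, x t + A2 + A1 + 1) / q := Nat.div_le_div_right (by omega)
  have t2 : ∑ t, (x t - d) / q + A1 / q + A2 / q ≤ (∑ t, x t + A2 + A1 - d) / q := by
    calc ∑ t, (x t - d) / q + A1 / q + A2 / q
        ≤ (∑ t, (x t - d)) / q + A1 / q + A2 / q :=
          Nat.add_le_add_right (Nat.add_le_add_right (sum_div_le' q _) _) _
      _ ≤ ((∑ t, (x t - d)) + A1) / q + A2 / q :=
          Nat.add_le_add_right (div_add_div_le' q _ _) _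
      _ ≤ ((∑ t, (x t - d)) + A1 + A2) / q := div_add_div_le' q _ _
      _ ≤ (∑ t, x t + A2 + A1 - d) / q := Nat.div_le_div_right (by omega)
  linarith

private lemma padicValNat_prod' {p : ℕ} [Fact p.Prime] {k : ℕ} (f : Fin k → ℕ)
    (hf : ∀ t, f t ≠ 0) : padicValNat p (∏ t, f t) = ∑ t, padicValNat p (f t) := by
  classical
  have H : ∀ s : Finset (Fin k),
      padicValNat p (∏ t ∈ s, f t) = ∑ t ∈ s, padicValNat p (f t) := by
    intro s
    induction s using Finset.induction with
    | empty => simp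
    | insert _ _ h ih =>
      rw [Finset.prod_insert h, padicValNat.mul (hf _)
        (Finset.prod_ne_zero_iff.mpr fun i _ => hf i), ih, Finset.sum_insert h]
  exact H Finset.univ


private lemma key_lemma' (p : ℕ) (hp : p.Prime) {k : ℕ} (hk : 0 < k)
    (x : Fin k → ℕ) (c : ℤ) (hpc : 2 * c ≤ (p : ℤ))
    (w : Fin k → ℕ) (hw : ∀ t, (w t : ℤ) = (x t : ℤ) + c)
    (A1 A2 : ℕ) (M : ℕ) (hM : (M : ℤ) = (∑ t, (x t : ℤ)) + A2 + A1 + c) :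
    padicValNat p (∏ t, ((x t).factorial * (w t).factorial)) +
      2 * padicValNat p (A1.factorial * A2.factorial)
      ≤ padicValNat p ((∑ t, x t + A2 + A1 + 1).factorial * M.factorial) := by
  haveI : Fact p.Prime := ⟨hp⟩
  have hcast : ((∑ t, x t : ℕ) : ℤ) = ∑ t, (x t : ℤ) := by push_cast; rfl
  have hM' : (M : ℤ) = ((∑ t, x t : ℕ) : ℤ) + A2 + A1 + c := by rw [hM, hcast]
  set X := ∑ t, x t with hXdef
  set B := X + A2 + A1 + M + 2 with hB
  have hlog : ∀ m : ℕ, m < B → Nat.log p m < B :=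
    fun m hm => lt_of_le_of_lt (Nat.log_le_self _ _) hm
  have hxX : ∀ t, x t ≤ X := fun t =>
    Finset.single_le_sum (f := x) (fun t _ => Nat.zero_le _) (Finset.mem_univ t)
  have hwM : ∀ t, w t ≤ M := by
    intro t
    have h1 := hw t
    have h2 : ((x t : ℕ) : ℤ) ≤ (X : ℤ) := by exact_mod_cast hxX t
    have h4 : (w t : ℤ) ≤ (M : ℤ) := by rw [h1, hM']; omega
    exact_mod_cast h4
  have leg : ∀ m : ℕ, m < B →
      padicValNat p m.factorial = ∑ r ∈ Finset.Ico 1 B, m / p ^ r :=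
    fun m hm => padicValNat_factorial (hlog m hm)
  have hfact_ne : ∀ m : ℕ, m.factorial ≠ 0 := fun m => (Nat.factorial_pos m).ne'
  have hprod_eq : padicValNat p (∏ t, ((x t).factorial * (w t).factorial))
      = ∑ t, (padicValNat p (x t).factorial + padicValNat p (w t).factorial) := by
    rw [padicValNat_prod' _ (fun t => Nat.mul_ne_zero (hfact_ne _) (hfact_ne _))]
    exact Finset.sum_congr rfl fun t _ => padicValNat.mul (hfact_ne _) (hfact_ne _)
  rw [hprod_eq, padicValNat.mul (hfact_ne _) (hfact_ne _),
    padicValNat.mul (hfact_ne _) (hfact_ne _)]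
  rw [leg A1 (by omega), leg A2 (by omega), leg (X + A2 + A1 + 1) (by omega),
    leg M (by omega)]
  have hxB : ∀ t : Fin k, x t < B := fun t => by have := hxX t; omega
  have hwB : ∀ t : Fin k, w t < B := fun t => by have := hwM t; omega
  have hsum_t : ∀ t : Fin k, padicValNat p (x t).factorial + padicValNat p (w t).factorial
      = ∑ r ∈ Finset.Ico 1 B, (x t / p ^ r + w t / p ^ r) := by
    intro t
    rw [leg _ (hxB t), leg _ (hwB t), ← Finset.sum_add_distrib]
  rw [Finset.sum_congr rfl fun t _ => hsum_t t, Finset.sum_comm]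
  simp only [← Finset.sum_add_distrib, Finset.mul_sum]
  refine Finset.sum_le_sum fun r hr => ?_
  have hr1 : 1 ≤ r := (Finset.mem_Ico.mp hr).1
  have hq : 0 < p ^ r := Nat.pow_pos hp.pos
  have hpq : p ≤ p ^ r := Nat.le_self_pow (by omega) p
  rcases le_or_gt 0 c with hc0 | hc0
  · -- c ≥ 0
    set c' := c.toNat with hc'
    have hcc : (c' : ℤ) = c := Int.toNat_of_nonneg hc0
    have hc2 : 2 * c' ≤ p ^ r := by
      have : 2 * (c' : ℤ) ≤ (p : ℤ) := by rw [hcc]; exact hpc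
      have h2 : 2 * c' ≤ p := by exact_mod_cast this
      omega
    have hww : ∀ t, w t = x t + c' := by
      intro t; have := hw t; omega
    have hMM : M = X + A2 + A1 + c' := by omega
    have hgoal := perq_pos (p ^ r) c' A1 A2 hq hc2 x
    rw [Finset.sum_congr rfl fun t (_ : t ∈ Finset.univ) => by rw [hww t]]
    rw [hMM]
    exact hgoal
  · -- c < 0
    set d := (-c).toNat with hd
    have hdd : (d : ℤ) = -c := Int.toNat_of_nonneg (by omega)
    have hxd : ∀ t, d ≤ x t := by
      intro t
      have h1 := hw t
      have h2 : (0 : ℤ) ≤ (w t : ℤ) := Int.natCast_nonneg _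
      omega
    have hww : ∀ t, w t = x t - d := by
      intro t; have := hw t; omega
    have hdX : d ≤ X := le_trans (hxd ⟨0, hk⟩) (hxX _)
    have hMM : M = X + A2 + A1 - d := by omega
    have hgoal := perq_neg (p ^ r) d A1 A2 hk x hxd
    rw [Finset.sum_congr rfl fun t (_ : t ∈ Finset.univ) => by rw [hww t]]
    rw [hMM]
    exact hgoal

theorem factorial_ratio_padic_valuation
    (s : ℕ) (hs : 1 ≤ s) (a : Fin s → ℕ) (ha : ∀ i, 0 < a i) (b : Fin s → ℤ)
    (N n : ℕ) (hn : N ≤ n)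
    (hpos : ∀ i, ∀ m : ℕ, N ≤ m → 0 < (a i : ℤ) * m + b i)
    (p : ℕ) (hp : p.Prime) (hpb : ∀ i, 2 * (b i - a i) ≤ (p : ℤ))
    (k : ℕ) (hk : 2 ≤ k) (σ : ℕ) (hσ : σ ≤ n)
    (j : Fin k → ℕ) (hj : ∑ t, j t = n - σ)
    (hjb : ∀ i t, 0 ≤ (a i : ℤ) * j t + b i - a i) :
    2 * ∑ i, (padicValNat p (Nat.factorial (a i - 1) * Nat.factorial (a i * σ)) : ℤ) ≤
      padicValRat p (∏ i,
        ((Nat.factorial (a i * n + a i) : ℚ) *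
            (Nat.factorial ((a i : ℤ) * n + b i - 1).toNat : ℚ)) /
          ∏ t, ((Nat.factorial (a i * j t) : ℚ) *
            (Nat.factorial (((a i : ℤ) * j t + b i - a i).toNat) : ℚ))) := by
  haveI : Fact p.Prime := ⟨hp⟩
  have hfact_ne : ∀ m : ℕ, m.factorial ≠ 0 := fun m => (Nat.factorial_pos m).ne'
  set Ni : Fin s → ℕ := fun i =>
    (a i * n + a i).factorial * (((a i : ℤ) * n + b i - 1).toNat).factorial with hNi
  set Di : Fin s → ℕ := fun i =>
    ∏ t, ((a i * j t).factorial * ((((a i : ℤ)) * j t + b i - a i).toNat).factorial) with hDi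
  have hNine : ∀ i, Ni i ≠ 0 := fun i => Nat.mul_ne_zero (hfact_ne _) (hfact_ne _)
  have hDine : ∀ i, Di i ≠ 0 := fun i =>
    Finset.prod_ne_zero_iff.mpr fun t _ => Nat.mul_ne_zero (hfact_ne _) (hfact_ne _)
  have harg : (∏ i,
        ((Nat.factorial (a i * n + a i) : ℚ) *
            (Nat.factorial ((a i : ℤ) * n + b i - 1).toNat : ℚ)) /
          ∏ t, ((Nat.factorial (a i * j t) : ℚ) *
            (Nat.factorial (((a i : ℤ) * j t + b i - a i).toNat) : ℚ)))
      = ((∏ i, Ni i : ℕ) : ℚ) / ((∏ i, Di i : ℕ) : ℚ) := by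
    rw [Nat.cast_prod, Nat.cast_prod, ← Finset.prod_div_distrib]
    refine Finset.prod_congr rfl fun i _ => ?_
    rw [hNi, hDi]
    push_cast
    rfl
  rw [harg, padicValRat.div (by exact_mod_cast Finset.prod_ne_zero_iff.mpr fun i _ => hNine i)
      (by exact_mod_cast Finset.prod_ne_zero_iff.mpr fun i _ => hDine i),
    padicValRat.of_nat, padicValRat.of_nat,
    padicValNat_prod' _ hNine, padicValNat_prod' _ hDine]
  have key : ∀ i, padicValNat p (Di i) +
      2 * padicValNat p ((a i - 1).factorial * (a i * σ).factorial) ≤ padicValNat p (Ni i) := by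
    intro i
    have hMnn : (0 : ℤ) ≤ (a i : ℤ) * n + b i - 1 := by
      have := hpos i n hn; omega
    have hsumx : ((∑ t, a i * j t : ℕ) : ℤ) = (a i : ℤ) * n - (a i : ℤ) * σ := by
      push_cast
      rw [← Finset.mul_sum, ← Nat.cast_sum]
      rw [hj, Nat.cast_sub hσ]
      ring
    have hXA : ∑ t, a i * j t + a i * σ + (a i - 1) + 1 = a i * n + a i := by
      have h2 : ((∑ t, a i * j t : ℕ) : ℤ) + (a i : ℤ) * σ = (a i : ℤ) * n := by
        rw [hsumx]; ring
      have h3 : (∑ t, a i * j t) + a i * σ = a i * n := by exact_mod_cast h2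
      have h4 := ha i
      omega
    have happ := key_lemma' p hp (by omega : 0 < k) (fun t => a i * j t) (b i - a i)
      (hpb i) (fun t => ((a i : ℤ) * j t + b i - a i).toNat)
      (fun t => by
        rw [Int.toNat_of_nonneg (hjb i t)]
        push_cast
        ring)
      (a i - 1) (a i * σ) (((a i : ℤ) * n + b i - 1).toNat)
      (by
        rw [Int.toNat_of_nonneg hMnn]
        have h5 : (∑ t, ((a i * j t : ℕ) : ℤ)) = (a i : ℤ) * n - (a i : ℤ) * σ := by
          rw [← hsumx]; push_cast; rfl
        rw [h5]
        have h6 : ((a i - 1 : ℕ) : ℤ) = (a i : ℤ) - 1 := by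
          have := ha i; push_cast [Nat.cast_sub this]; ring
        rw [h6]
        push_cast
        ring)
    rw [hXA] at happ
    exact happ
  have hsum := Finset.sum_le_sum fun i (_ : i ∈ Finset.univ) => key i
  rw [Finset.sum_add_distrib, ← Finset.mul_sum] at hsum
  have hcast2 : ∀ (f : Fin s → ℕ), ((∑ i, f i : ℕ) : ℤ) = ∑ i, (f i : ℤ) := fun f => by
    push_cast; rfl
  have h7 : (∑ i, (padicValNat p (Di i) : ℤ))
      + 2 * ∑ i, (padicValNat p ((a i - 1).factorial * (a i * σ).factorial) : ℤ)
      ≤ ∑ i, (padicValNat p (Ni i) : ℤ) := by exact_mod_cast hsum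
  rw [hcast2, hcast2]
  linarith
end

section
/- Let p be a prime, ℓ ≥ 1, and let N, A, B, S, J₁,…,J_{k-1} be elements of [0,1) that are fractional parts of rationals with denominator p^ℓ, with B ≤ 1/2. Suppose J_t + B ≥ 1 for 1 ≤ t ≤ m and J_t + B < 1 for m+1 ≤ t ≤ k-1, where m ≥ 1, and suppose N + B < 1. Then ⌊N + B - J₁ - ⋯ - J_{k-1} - S⌋ ≤ -⌈(m-1)/2⌉ and, if additionally N < J₁, then ⌊N - J₁ - ⋯ - J_{k-1} - S⌋ ≤ -⌈m/2⌉. -/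
theorem floor_fractional_estimate (p : ℕ) (hp : p.Prime) (ℓ : ℕ) (hℓ : 1 ≤ ℓ)
    (k m : ℕ) (hm : 1 ≤ m) (hmk : m ≤ k - 1) (hk : 2 ≤ k)
    (N A B S : ℚ) (J : ℕ → ℚ)
    (hN : ∃ c : ℕ, N = c / p ^ ℓ ∧ N < 1) (hA : ∃ c : ℕ, A = c / p ^ ℓ ∧ A < 1)
    (hB : ∃ c : ℕ, B = c / p ^ ℓ ∧ B < 1) (hS : ∃ c : ℕ, S = c / p ^ ℓ ∧ S < 1)
    (hJ : ∀ t, 1 ≤ t → t ≤ k - 1 → ∃ c : ℕ, J t = c / p ^ ℓ ∧ J t < 1)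
    (hB2 : B ≤ 1 / 2)
    (hJm : ∀ t, 1 ≤ t → t ≤ m → 1 ≤ J t + B)
    (hJm' : ∀ t, m + 1 ≤ t → t ≤ k - 1 → J t + B < 1)
    (hNB : N + B < 1) :
    ⌊N + B - (∑ t ∈ Finset.Icc 1 (k - 1), J t) - S⌋ ≤ -⌈((m : ℚ) - 1) / 2⌉ ∧
    (N < J 1 →
      ⌊N - (∑ t ∈ Finset.Icc 1 (k - 1), J t) - S⌋ ≤ -⌈(m : ℚ) / 2⌉) := by
  have hp0 : (0:ℚ) < (p:ℚ) := by exact_mod_cast hp.pos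
  obtain ⟨cS, hSc, hS1⟩ := hS
  have hS0 : 0 ≤ S := by rw [hSc]; positivity
  have hJ0 : ∀ t, 1 ≤ t → t ≤ k - 1 → 0 ≤ J t := by
    intro t h1 h2
    obtain ⟨c, hc, _⟩ := hJ t h1 h2
    rw [hc]; positivity
  have hJhalf : ∀ t, 1 ≤ t → t ≤ m → (1:ℚ)/2 ≤ J t := by
    intro t h1 h2
    have := hJm t h1 h2
    linarith
  have e1 : ∀ n : ℕ, Finset.Icc 1 n = Finset.Ioc 0 n := by
    intro n; ext x; simp [Finset.mem_Icc, Finset.mem_Ioc]; omega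
  have e2 : ∀ a b : ℕ, Finset.Icc (a+1) b = Finset.Ioc a b := by
    intro a b; ext x; simp [Finset.mem_Icc, Finset.mem_Ioc]
  -- split the sum
  have hsplit : ∑ t ∈ Finset.Icc 1 (k-1), J t
      = ∑ t ∈ Finset.Icc 1 m, J t + ∑ t ∈ Finset.Icc (m+1) (k-1), J t := by
    rw [e1, e1, e2]
    exact (Finset.sum_Ioc_consecutive _ (Nat.zero_le m) hmk).symm
  have hsum2 : 0 ≤ ∑ t ∈ Finset.Icc (m+1) (k-1), J t := by
    apply Finset.sum_nonneg
    intro t ht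
    rw [Finset.mem_Icc] at ht
    exact hJ0 t (by omega) ht.2
  have hsum1 : (m:ℚ)/2 ≤ ∑ t ∈ Finset.Icc 1 m, J t := by
    have h := Finset.sum_le_sum (f := fun _ : ℕ => (1:ℚ)/2) (g := J)
      (s := Finset.Icc 1 m) (fun t ht => by
        rw [Finset.mem_Icc] at ht; exact hJhalf t ht.1 ht.2)
    rw [Finset.sum_const, Nat.card_Icc] at h
    have h' : ((m + 1 - 1 : ℕ) • ((1:ℚ)/2)) = (m:ℚ)/2 := by
      simp [nsmul_eq_mul]; ring
    rw [h'] at h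
    exact h
  constructor
  · -- first part
    have hx : N + B - (∑ t ∈ Finset.Icc 1 (k-1), J t) - S < 1 - (m:ℚ)/2 := by
      rw [hsplit]; linarith
    have hc1 : (⌈((m:ℚ) - 1)/2⌉ : ℚ) ≤ (m:ℚ)/2 := by
      have h := Int.ceil_lt_add_one (((m:ℚ) - 1)/2)
      have h3 : 2 * ⌈((m:ℚ) - 1)/2⌉ < (m:ℤ) + 1 := by
        exact_mod_cast (by push_cast; linarith : (2 * ⌈((m:ℚ) - 1)/2⌉ : ℚ) < (m:ℚ) + 1)
      have h4 : 2 * ⌈((m:ℚ) - 1)/2⌉ ≤ (m:ℤ) := by omega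
      have h5 : (2 * ⌈((m:ℚ) - 1)/2⌉ : ℚ) ≤ (m:ℚ) := by exact_mod_cast h4
      linarith
    have hfl : ⌊N + B - (∑ t ∈ Finset.Icc 1 (k-1), J t) - S⌋ < -⌈((m:ℚ) - 1)/2⌉ + 1 := by
      apply Int.floor_lt.mpr
      push_cast
      linarith
    omega
  · -- second part
    intro hNJ
    have hsplit2 : ∑ t ∈ Finset.Icc 1 m, J t = J 1 + ∑ t ∈ Finset.Icc 2 m, J t := by
      rw [e1, show (2:ℕ) = 1 + 1 from rfl, e2,
        ← Finset.sum_Ioc_consecutive _ (Nat.zero_le 1) hm]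
      simp
    have htail : ((m:ℚ) - 1)/2 ≤ ∑ t ∈ Finset.Icc 2 m, J t := by
      have h := Finset.sum_le_sum (f := fun _ : ℕ => (1:ℚ)/2) (g := J)
        (s := Finset.Icc 2 m) (fun t ht => by
          rw [Finset.mem_Icc] at ht; exact hJhalf t (by omega) ht.2)
      rw [Finset.sum_const, Nat.card_Icc] at h
      have h' : ((m + 1 - 2 : ℕ) • ((1:ℚ)/2)) = ((m:ℚ) - 1)/2 := by
        have e : m + 1 - 2 = m - 1 := by omega
        rw [e, nsmul_eq_mul, Nat.cast_sub hm]
        push_cast; ring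
      rw [h'] at h
      exact h
    have hsum1' : J 1 + ((m:ℚ) - 1)/2 ≤ ∑ t ∈ Finset.Icc 1 m, J t := by
      rw [hsplit2]; linarith
    have hx : N - (∑ t ∈ Finset.Icc 1 (k-1), J t) - S < -((m:ℚ) - 1)/2 := by
      rw [hsplit]; linarith
    have hc2 : (⌈(m:ℚ)/2⌉ : ℚ) ≤ ((m:ℚ) + 1)/2 := by
      have h := Int.ceil_lt_add_one ((m:ℚ)/2)
      have h3 : 2 * ⌈(m:ℚ)/2⌉ < (m:ℤ) + 2 := by
        exact_mod_cast (by push_cast; linarith : (2 * ⌈(m:ℚ)/2⌉ : ℚ) < (m:ℚ) + 2)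
      have h4 : 2 * ⌈(m:ℚ)/2⌉ ≤ (m:ℤ) + 1 := by omega
      have h5 : (2 * ⌈(m:ℚ)/2⌉ : ℚ) ≤ (m:ℚ) + 1 := by exact_mod_cast h4
      linarith
    have hfl : ⌊N - (∑ t ∈ Finset.Icc 1 (k-1), J t) - S⌋ < -⌈(m:ℚ)/2⌉ + 1 := by
      apply Int.floor_lt.mpr
      push_cast
      linarith
    omega
end

section
/- Define (ℓ_n) as the Taylor coefficients at 0 of the compositional inverse ℓ of the dilogarithm Li₂(x) = Σ_{n≥1} x^n/n². Then ℓ₀ = 0, ℓ₁ = 1, ℓ₂ = -1/4, ℓ₃ = 1/72, ℓ₄ = -1/576, and ℓ satisfies the differential equation ℓ''ℓ - ℓ''ℓ² + (ℓ')³ + (ℓ')²ℓ - (ℓ')² = 0 as an identity of formal power series. -/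
open PowerSeries

namespace DilogAux

open Finset

/-- Coefficientwise sum of a family of power series, assuming `F k` has order ≥ `k - 1`. -/
noncomputable def Ser (F : ℕ → PowerSeries ℚ) : PowerSeries ℚ :=
  PowerSeries.mk fun n => ∑ k ∈ Finset.range (n + 2), PowerSeries.coeff n (F k)

lemma coeff_derivativeFun' (f : PowerSeries ℚ) (n : ℕ) :
    PowerSeries.coeff n f.derivativeFun = PowerSeries.coeff (n + 1) f * (n + 1) :=
  PowerSeries.coeff_derivative f n

lemma coeff_Ser (F : ℕ → PowerSeries ℚ)
    (hF : ∀ n k : ℕ, n + 1 < k → PowerSeries.coeff n (F k) = 0)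
    {n N : ℕ} (h : n + 1 ≤ N) :
    PowerSeries.coeff n (Ser F) = ∑ k ∈ Finset.range (N + 1), PowerSeries.coeff n (F k) := by
  rw [Ser, coeff_mk]
  apply Finset.sum_subset
  · intro k hk
    simp only [Finset.mem_range] at hk ⊢
    omega
  · intro k hk hk'
    simp only [Finset.mem_range] at hk hk'
    exact hF n k (by omega)

lemma mul_Ser (F : ℕ → PowerSeries ℚ)
    (hF : ∀ n k : ℕ, n + 1 < k → PowerSeries.coeff n (F k) = 0)
    (f : PowerSeries ℚ) :
    f * Ser F = Ser (fun k => f * F k) := by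
  ext n
  conv_rhs => rw [Ser, coeff_mk]
  rw [coeff_mul]
  have h1 : ∀ p ∈ Finset.HasAntidiagonal.antidiagonal n,
      PowerSeries.coeff p.1 f * PowerSeries.coeff p.2 (Ser F)
        = ∑ k ∈ Finset.range (n + 2),
            PowerSeries.coeff p.1 f * PowerSeries.coeff p.2 (F k) := by
    intro p hp
    have hp2 : p.2 ≤ n := by
      simp only [Finset.HasAntidiagonal.mem_antidiagonal] at hp; omega
    rw [coeff_Ser F hF (N := n + 1) (by omega), Finset.mul_sum]
  rw [Finset.sum_congr rfl h1, Finset.sum_comm]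
  exact Finset.sum_congr rfl fun k _ => (coeff_mul n f (F k)).symm

lemma deriv_Ser (F : ℕ → PowerSeries ℚ)
    (hF0 : ∀ n k : ℕ, n < k → PowerSeries.coeff n (F k) = 0) :
    (Ser F).derivativeFun = Ser (fun k => (F k).derivativeFun) := by
  ext n
  rw [coeff_derivativeFun',
    coeff_Ser F (fun n k h => hF0 n k (by omega)) (N := n + 2) (by omega),
    Ser, coeff_mk]
  rw [Finset.sum_range_succ, hF0 (n + 1) (n + 2) (by omega), add_zero, Finset.sum_mul]
  exact Finset.sum_congr rfl fun k _ => (coeff_derivativeFun' (F k) n).symm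

lemma derivativeFun_zero : (0 : PowerSeries ℚ).derivativeFun = 0 := by
  ext n
  simp [coeff_derivativeFun']

lemma dpow (f : PowerSeries ℚ) : ∀ k : ℕ,
    (f ^ (k + 1)).derivativeFun = ((k : PowerSeries ℚ) + 1) * (f ^ k * f.derivativeFun)
  | 0 => by simp
  | (k + 1) => by
    have h : f ^ (k + 2) = f * f ^ (k + 1) := by ring
    rw [h, derivativeFun_mul, dpow f k, smul_eq_mul, smul_eq_mul]
    push_cast
    ring

end DilogAux

open DilogAux Finset

theorem dilog_inverse_coeffs_and_ode (ℓ : PowerSeries ℚ)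
    (h0 : PowerSeries.coeff 0 ℓ = 0)
    (hcomp : ∀ n : ℕ,
      ∑ k ∈ Finset.Icc 1 n, (1 / (k : ℚ) ^ 2) * PowerSeries.coeff n (ℓ ^ k) =
        if n = 1 then 1 else 0) :
    PowerSeries.coeff 0 ℓ = 0 ∧ PowerSeries.coeff 1 ℓ = 1 ∧
    PowerSeries.coeff 2 ℓ = -1 / 4 ∧ PowerSeries.coeff 3 ℓ = 1 / 72 ∧
    PowerSeries.coeff 4 ℓ = -1 / 576 ∧
    ℓ.derivativeFun.derivativeFun * ℓ - ℓ.derivativeFun.derivativeFun * ℓ ^ 2 +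
      ℓ.derivativeFun ^ 3 + ℓ.derivativeFun ^ 2 * ℓ - ℓ.derivativeFun ^ 2 = 0 := by
  -- order of ℓ^k is at least k
  have hz : ∀ {n k : ℕ}, n < k → PowerSeries.coeff n (ℓ ^ k) = 0 := by
    intro n k h
    have hX : (PowerSeries.X : PowerSeries ℚ) ∣ ℓ := by
      rw [PowerSeries.X_dvd_iff]
      simpa using h0
    exact PowerSeries.X_pow_dvd_iff.1 (pow_dvd_pow_of_dvd hX k) n h
  -- vanishing lemmas for the families
  have hF0 : ∀ (c : ℕ → ℚ) (n k : ℕ), n < k → PowerSeries.coeff n (c k • ℓ ^ k) = 0 := by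
    intro c n k h
    rw [map_smul, smul_eq_mul, hz h, mul_zero]
  have hF1 : ∀ (c : ℕ → ℚ) (n k : ℕ), n + 1 < k → PowerSeries.coeff n (c k • ℓ ^ k) = 0 :=
    fun c n k h => hF0 c n k (by omega)
  have hFd : ∀ (c : ℕ → ℚ) (n k : ℕ), n + 1 < k →
      PowerSeries.coeff n ((c k • ℓ ^ k).derivativeFun) = 0 := by
    intro c n k h
    rw [coeff_derivativeFun', hF0 c (n + 1) k h, zero_mul]
  -- M = X
  have hM : Ser (fun k => (1 / (k : ℚ) ^ 2) • ℓ ^ k) = PowerSeries.X := by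
    ext n
    rw [Ser, coeff_mk, PowerSeries.coeff_X, ← hcomp n]
    rw [eq_comm]
    apply Finset.sum_subset
    · intro k hk
      simp only [Finset.mem_Icc, Finset.mem_range] at hk ⊢
      omega
    · intro k hk hk'
      simp only [Finset.mem_Icc, Finset.mem_range] at hk hk'
      rcases Nat.eq_zero_or_pos k with h | h
      · subst h; simp
      · rw [hz (by omega), mul_zero]
  -- termwise identities
  have hterm2 : ∀ k : ℕ, ℓ * ((1 / (k : ℚ) ^ 2) • ℓ ^ k).derivativeFun
      = ℓ.derivativeFun * ((1 / (k : ℚ)) • ℓ ^ k) := by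
    intro k
    cases k with
    | zero => simp [derivativeFun_smul, derivativeFun_zero]
    | succ j =>
      rw [derivativeFun_smul, dpow, PowerSeries.smul_eq_C_mul, PowerSeries.smul_eq_C_mul]
      have hj : ((j : ℚ) + 1) ≠ 0 := by positivity
      have hcast : ((j : PowerSeries ℚ) + 1) = PowerSeries.C ((j : ℚ) + 1) := by
        rw [map_add, map_one, map_natCast]
      have key : PowerSeries.C (1 / ((j : ℚ) + 1) ^ 2) * PowerSeries.C ((j : ℚ) + 1)
          = PowerSeries.C (1 / ((j : ℚ) + 1)) := by
        rw [← map_mul]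
        congr 1
        field_simp
      rw [hcast]
      push_cast
      linear_combination (ℓ ^ j * ℓ.derivativeFun * ℓ) * key
  have hterm1 : ∀ k : ℕ, ℓ * ((1 / (k : ℚ)) • ℓ ^ k).derivativeFun
      = ℓ.derivativeFun * ((if k = 0 then (0 : ℚ) else 1) • ℓ ^ k) := by
    intro k
    cases k with
    | zero =>
      have ha : ((1 / ((0 : ℕ) : ℚ)) • ℓ ^ 0) = 0 := by norm_num
      have hb : (((if (0 : ℕ) = 0 then (0 : ℚ) else 1)) • ℓ ^ 0) = 0 := by norm_num
      rw [ha, hb, derivativeFun_zero, mul_zero, mul_zero]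
    | succ j =>
      simp only [Nat.add_one_ne_zero, if_false, one_smul]
      rw [derivativeFun_smul, dpow, PowerSeries.smul_eq_C_mul]
      have hj : ((j : ℚ) + 1) ≠ 0 := by positivity
      have hcast : ((j : PowerSeries ℚ) + 1) = PowerSeries.C ((j : ℚ) + 1) := by
        rw [map_add, map_one, map_natCast]
      have key : PowerSeries.C (1 / ((j : ℚ) + 1)) * PowerSeries.C ((j : ℚ) + 1)
          = 1 := by
        rw [← map_mul, ← map_one PowerSeries.C]
        congr 1
        field_simp
      rw [hcast]
      push_cast
      linear_combination (ℓ ^ j * ℓ.derivativeFun * ℓ) * key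
  -- the three series identities
  have hA1 : ℓ * (Ser (fun k => (1 / (k : ℚ) ^ 2) • ℓ ^ k)).derivativeFun
      = ℓ.derivativeFun * Ser (fun k => (1 / (k : ℚ)) • ℓ ^ k) := by
    rw [deriv_Ser _ (hF0 _), mul_Ser _ (hFd _) ℓ, mul_Ser _ (hF1 _) ℓ.derivativeFun]
    exact congrArg Ser (funext hterm2)
  have hA2 : ℓ * (Ser (fun k => (1 / (k : ℚ)) • ℓ ^ k)).derivativeFun
      = ℓ.derivativeFun * Ser (fun k => (if k = 0 then (0 : ℚ) else 1) • ℓ ^ k) := by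
    rw [deriv_Ser _ (hF0 _), mul_Ser _ (hFd _) ℓ, mul_Ser _ (hF1 _) ℓ.derivativeFun]
    exact congrArg Ser (funext hterm1)
  have hA3 : (1 - ℓ) * Ser (fun k => (if k = 0 then (0 : ℚ) else 1) • ℓ ^ k) = ℓ := by
    rw [mul_Ser _ (hF1 _) (1 - ℓ)]
    ext n
    rw [Ser, coeff_mk, Finset.sum_range_succ']
    have hg0 : PowerSeries.coeff n ((1 - ℓ) * ((if (0 : ℕ) = 0 then (0 : ℚ) else 1) • ℓ ^ 0)) = 0 := by
      simp
    rw [hg0, add_zero]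
    have hgs : ∀ k ∈ Finset.range (n + 1),
        PowerSeries.coeff n ((1 - ℓ) * ((if k + 1 = 0 then (0 : ℚ) else 1) • ℓ ^ (k + 1)))
          = PowerSeries.coeff n (ℓ ^ (k + 1)) - PowerSeries.coeff n (ℓ ^ (k + 2)) := by
      intro k _
      rw [← map_sub]
      congr 1
      simp only [Nat.succ_ne_zero, if_false, one_smul]
      ring
    rw [Finset.sum_congr rfl hgs, Finset.sum_range_sub' (fun i => PowerSeries.coeff n (ℓ ^ (i + 1)))]
    rw [hz (by omega : n < n + 2), sub_zero, pow_one]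
  -- derivative of M is 1
  have hMd : (Ser (fun k => (1 / (k : ℚ) ^ 2) • ℓ ^ k)).derivativeFun = 1 := by
    rw [hM]
    ext n
    rw [coeff_derivativeFun', PowerSeries.coeff_X, PowerSeries.coeff_one]
    rcases Nat.eq_zero_or_pos n with h | h
    · subst h; norm_num
    · rw [if_neg (by omega), if_neg (by omega), zero_mul]
  have E1 : ℓ = ℓ.derivativeFun * Ser (fun k => (1 / (k : ℚ)) • ℓ ^ k) := by
    rw [← hA1, hMd, mul_one]
  -- basic coefficients
  have e1 := hcomp 1
  have e2 := hcomp 2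
  have e3 := hcomp 3
  have e4 := hcomp 4
  have hIcc1 : Finset.Icc 1 1 = ({1} : Finset ℕ) := rfl
  have hIcc2 : Finset.Icc 1 2 = ({1, 2} : Finset ℕ) := rfl
  have hIcc3 : Finset.Icc 1 3 = ({1, 2, 3} : Finset ℕ) := rfl
  have hIcc4 : Finset.Icc 1 4 = ({1, 2, 3, 4} : Finset ℕ) := rfl
  rw [hIcc1] at e1; rw [hIcc2] at e2; rw [hIcc3] at e3; rw [hIcc4] at e4
  simp only [Finset.sum_insert, Finset.mem_insert, Finset.mem_singleton, Finset.sum_singleton,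
    pow_one] at e1 e2 e3 e4
  norm_num at e1 e2 e3 e4
  have hmul : ∀ (n : ℕ) (f g : PowerSeries ℚ), PowerSeries.coeff n (f * g) =
      ∑ i ∈ Finset.range (n + 1), PowerSeries.coeff i f * PowerSeries.coeff (n - i) g := by
    intro n f g
    rw [PowerSeries.coeff_mul, Finset.Nat.sum_antidiagonal_eq_sum_range_succ_mk]
  have h1 : PowerSeries.coeff 1 ℓ = 1 := e1
  have hsq2 : PowerSeries.coeff 2 (ℓ ^ 2) = 1 := by
    rw [pow_two, hmul]
    norm_num [Finset.sum_range_succ, h0, h1]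
  have hc2 : PowerSeries.coeff 2 ℓ = -1 / 4 := by
    rw [hsq2] at e2
    linarith
  have hsq3 : PowerSeries.coeff 3 (ℓ ^ 2) = -1 / 2 := by
    rw [pow_two, hmul]
    norm_num [Finset.sum_range_succ, h0, h1, hc2]
  have hcb3 : PowerSeries.coeff 3 (ℓ ^ 3) = 1 := by
    rw [pow_succ, hmul]
    norm_num [Finset.sum_range_succ, h0, h1, hsq2,
      hz (show (1:ℕ) < 2 by omega), hz (show (0:ℕ) < 2 by omega)]
  have hc3 : PowerSeries.coeff 3 ℓ = 1 / 72 := by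
    rw [hsq3, hcb3] at e3
    linarith
  have hsq4 : PowerSeries.coeff 4 (ℓ ^ 2) = 13 / 144 := by
    rw [pow_two, hmul]
    norm_num [Finset.sum_range_succ, h0, h1, hc2, hc3]
  have hcb4 : PowerSeries.coeff 4 (ℓ ^ 3) = -3 / 4 := by
    rw [pow_succ, hmul]
    norm_num [Finset.sum_range_succ, h0, h1, hc2, hsq2, hsq3,
      hz (show (1:ℕ) < 2 by omega), hz (show (0:ℕ) < 2 by omega)]
  have hq4 : PowerSeries.coeff 4 (ℓ ^ 4) = 1 := by
    rw [show (4:ℕ) = 3 + 1 from rfl, pow_succ, hmul]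
    norm_num [Finset.sum_range_succ, h0, h1, hcb3,
      hz (show (2:ℕ) < 3 by omega), hz (show (1:ℕ) < 3 by omega), hz (show (0:ℕ) < 3 by omega)]
  have hc4 : PowerSeries.coeff 4 ℓ = -1 / 576 := by
    rw [hsq4, hcb4, hq4] at e4
    linarith
  have hl : ℓ ≠ 0 := fun h => by rw [h] at h1; simp at h1
  have ES : (Ser (fun k => (1 / (k : ℚ)) • ℓ ^ k)).derivativeFun * (1 - ℓ) = ℓ.derivativeFun :=
    mul_left_cancel₀ hl (by linear_combination (1 - ℓ) * hA2 + ℓ.derivativeFun * hA3)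
  have E4 : ℓ.derivativeFun = ℓ.derivativeFun * (Ser (fun k => (1 / (k : ℚ)) • ℓ ^ k)).derivativeFun
      + Ser (fun k => (1 / (k : ℚ)) • ℓ ^ k) * ℓ.derivativeFun.derivativeFun := by
    have h := congrArg PowerSeries.derivativeFun E1
    rw [derivativeFun_mul] at h
    simpa [smul_eq_mul] using h
  refine ⟨h0, h1, hc2, hc3, hc4, ?_⟩
  linear_combination ((1 - ℓ) * ℓ.derivativeFun.derivativeFun) * E1
    - (ℓ.derivativeFun ^ 2) * ES - (ℓ.derivativeFun * (1 - ℓ)) * E4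
end
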